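/- Let q be a conjunctive query over a schema R, D a database for R, and Σ a set of TGDs over R in normal form for which XRewrite terminates on every component of the optimal existential-join decomposition of q w.r.t. Σ (in particular, Σ linear or sticky). Then q_Σ^∥(D) = ans(q,D,Σ), where q_Σ^∥ is the UCQ produced by XRewriteParallel(q,Σ). -/

import Mathlib

namespace OntDB

/-- Terms: constants, labeled nulls, and variables (each indexed by naturals). -/
inductive Term : Type
  | const : ℕ → Term
  | null  : ℕ → Term
  | var   : ℕ → Term
deriving DecidableEq

/-- a term is not a labeled null -/
def Term.noNull : Term → Prop
  | .null _ => False
  | _ => True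

/-- Atoms: a predicate symbol applied to a list of argument terms. -/
structure Atom : Type where
  pred : ℕ
  args : List Term
deriving DecidableEq

/-- A relational schema: a finite set of predicate symbols, each with an arity. -/
structure Schema : Type where
  preds : Finset ℕ
  ar : ℕ → ℕ

/-- arity(R) : the maximum arity over the predicates of R -/
def Schema.maxArity (R : Schema) : ℕ := R.preds.sup R.ar

def Atom.overSchema (R : Schema) (a : Atom) : Prop :=
  a.pred ∈ R.preds ∧ a.args.length = R.ar a.pred

/-- applying a substitution to an atom -/
def Atom.subst (h : Term → Term) (a : Atom) : Atom := ⟨a.pred, a.args.map h⟩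

/-- a substitution fixes every constant -/
def constFix (h : Term → Term) : Prop := ∀ c, h (Term.const c) = Term.const c

/-- A homomorphism from the set of atoms `A` to the set of atoms `A'`. -/
def IsHom (h : Term → Term) (A A' : Set Atom) : Prop :=
  constFix h ∧ ∀ a ∈ A, a.subst h ∈ A'

/-- the variables occurring in an atom -/
def Atom.vars (a : Atom) : Finset ℕ :=
  (a.args.filterMap (fun t => match t with | .var v => some v | _ => none)).toFinset

/-- the number of occurrences of the variable `v` in the atom `a` -/
def Atom.countVar (a : Atom) (v : ℕ) : ℕ := a.args.count (Term.var v)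

/-- the variables occurring in a finite set of atoms -/
def varsOfSet (S : Finset Atom) : Finset ℕ := S.sup Atom.vars

/-- A conjunctive query: a head atom together with a finite set of body atoms. -/
structure CQ : Type where
  head : Atom
  body : Finset Atom
deriving DecidableEq

/-- the variables occurring in a CQ (head and body) -/
def CQ.vars (q : CQ) : Finset ℕ := q.head.vars ∪ varsOfSet q.body

/-- the number of occurrences of the variable `v` in the CQ `q` (head and body) -/
def CQ.countVar (q : CQ) (v : ℕ) : ℕ := q.head.countVar v + ∑ a ∈ q.body, a.countVar v

/-- a variable is shared in `q` if it occurs more than once in `q` -/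
def CQ.shared (q : CQ) (v : ℕ) : Prop := 2 ≤ q.countVar v

/-- a CQ over a schema: body atoms over the schema, and no labeled nulls occur -/
def CQ.overSchema (R : Schema) (q : CQ) : Prop :=
  (∀ a ∈ q.body, a.overSchema R ∧ ∀ t ∈ a.args, t.noNull) ∧ ∀ t ∈ q.head.args, t.noNull

/-- a tuple of constants -/
def isConstTuple (t : List Term) : Prop := ∀ s ∈ t, ∃ c, s = Term.const c

/-- Evaluation of a CQ over an instance: the tuples of constants obtained as images
of the distinguished terms under homomorphisms of the body into the instance. -/
def CQ.eval (q : CQ) (I : Set Atom) : Set (List Term) :=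
  { t | isConstTuple t ∧ ∃ h : Term → Term, IsHom h ↑q.body I ∧ q.head.args.map h = t }

/-- evaluation of a (possibly infinite) union of CQs -/
def ucqEval (Q : Set CQ) (I : Set Atom) : Set (List Term) := ⋃ q ∈ Q, q.eval I

/-- A TGD (in normal form representation): a finite set of body atoms plus a single
head atom; the existentially quantified variables are exactly the head variables
that do not occur in the body. -/
structure TGD : Type where
  body : Finset Atom
  head : Atom
deriving DecidableEq

/-- the universally quantified variables occurring in the head -/
def TGD.frontier (σ : TGD) : Finset ℕ := varsOfSet σ.body ∩ σ.head.vars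

/-- the existentially quantified variables -/
def TGD.exVars (σ : TGD) : Finset ℕ := σ.head.vars \ varsOfSet σ.body

def TGD.vars (σ : TGD) : Finset ℕ := varsOfSet σ.body ∪ σ.head.vars

/-- normal form: at most one existentially quantified variable, occurring once -/
def TGD.NormalForm (σ : TGD) : Prop :=
  σ.exVars.card ≤ 1 ∧ ∀ v ∈ σ.exVars, σ.head.countVar v = 1

/-- a TGD is linear if its body consists of a single atom -/
def TGD.Linear (σ : TGD) : Prop := σ.body.card = 1

/-- a set of TGDs is linear if all its members are -/
def LinearSet (Sig : Finset TGD) : Prop := ∀ σ ∈ Sig, σ.Linear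

def TGD.overSchema (R : Schema) (σ : TGD) : Prop :=
  σ.body.Nonempty ∧ (∀ a ∈ σ.body, a.overSchema R ∧ ∀ t ∈ a.args, t.noNull) ∧
  σ.head.overSchema R ∧ ∀ t ∈ σ.head.args, t.noNull

/-- satisfaction of a TGD by an instance -/
def TGD.sat (σ : TGD) (I : Set Atom) : Prop :=
  ∀ h : Term → Term, IsHom h ↑σ.body I →
    ∃ h' : Term → Term, constFix h' ∧
      (∀ v ∈ σ.frontier, h' (Term.var v) = h (Term.var v)) ∧ σ.head.subst h' ∈ I

/-- satisfaction of a set of TGDs -/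
def satSet (Sig : Finset TGD) (I : Set Atom) : Prop := ∀ σ ∈ Sig, σ.sat I

/-- a database for a schema: a finite set of atoms over the schema whose
arguments are constants -/
def IsDatabase (R : Schema) (D : Finset Atom) : Prop :=
  ∀ a ∈ D, a.overSchema R ∧ ∀ t ∈ a.args, ∃ c, t = Term.const c

/-- the certain answers of a CQ w.r.t. a database and a set of TGDs -/
def certAns (q : CQ) (D : Finset Atom) (Sig : Finset TGD) : Set (List Term) :=
  { t | ∀ I : Set Atom, ↑D ⊆ I → satSet Sig I → t ∈ q.eval I }

/-- the certain answers of a (possibly infinite) union of CQs -/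
def certAnsUCQ (Q : Set CQ) (D : Finset Atom) (Sig : Finset TGD) : Set (List Term) :=
  { t | ∀ I : Set Atom, ↑D ⊆ I → satSet Sig I → t ∈ ucqEval Q I }

/-- a unifier for a finite set of atoms -/
def IsUnifier (γ : Term → Term) (S : Finset Atom) : Prop :=
  constFix γ ∧ ∀ a ∈ S, ∀ b ∈ S, a.subst γ = b.subst γ

def Unifies (S : Finset Atom) : Prop := ∃ γ, IsUnifier γ S

/-- most general unifier -/
def IsMGU (γ : Term → Term) (S : Finset Atom) : Prop :=
  IsUnifier γ S ∧ ∀ γ', IsUnifier γ' S → ∃ δ : Term → Term, ∀ t, γ' t = δ (γ t)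

/-- `i` is the position of the existentially quantified variable in head(σ) -/
def TGD.exPos (σ : TGD) (i : ℕ) : Prop :=
  ∃ z ∈ σ.exVars, σ.head.args[i]? = some (Term.var z)

/-- applicability of the TGD σ to the set S ⊆ body(q) -/
def Applicable (q : CQ) (σ : TGD) (S : Finset Atom) : Prop :=
  S.Nonempty ∧ S ⊆ q.body ∧ Unifies (S ∪ {σ.head}) ∧
  ∀ a ∈ S, ∀ i, σ.exPos i →
    (∀ c, a.args[i]? ≠ some (Term.const c)) ∧
    ∀ v, a.args[i]? = some (Term.var v) → ¬ q.shared v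

/-- factorizability of the set S ⊆ body(q) w.r.t. the TGD σ -/
def Factorizable (q : CQ) (σ : TGD) (S : Finset Atom) : Prop :=
  S ⊆ q.body ∧ 2 ≤ S.card ∧ Unifies S ∧ (∃ i, σ.exPos i) ∧
  ∃ V : ℕ, V ∉ varsOfSet (q.body \ S) ∧
    ∀ a ∈ S, (∃ i, σ.exPos i ∧ a.args[i]? = some (Term.var V)) ∧
      ∀ j, a.args[j]? = some (Term.var V) → σ.exPos j

/-- renaming of variables -/
def renT (ρ : ℕ → ℕ) : Term → Term
  | .var v => .var (ρ v)
  | t => t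

/-- renaming the variables of a TGD -/
def TGD.rename (σ : TGD) (ρ : ℕ → ℕ) : TGD :=
  ⟨σ.body.image (Atom.subst (renT ρ)), σ.head.subst (renT ρ)⟩

/-- applying a substitution to a CQ -/
def CQ.subst (q : CQ) (γ : Term → Term) : CQ :=
  ⟨q.head.subst γ, q.body.image (Atom.subst γ)⟩

/-- the restriction on MGUs used by XRewrite under sticky sets of TGDs:
every variable of the protected set `W` (the variables of the input query) is
mapped to a variable of `W` (or to a constant).  For `W = ∅` no restriction. -/
def ProtectsVars (W : Finset ℕ) (γ : Term → Term) : Prop :=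
  ∀ v ∈ W, (∃ u ∈ W, γ (Term.var v) = Term.var u) ∨ ∃ c, γ (Term.var v) = Term.const c

/-- the substitution is the identity on all variables outside `V` -/
def IdOutside (V : Finset ℕ) (γ : Term → Term) : Prop :=
  ∀ v, v ∉ V → γ (Term.var v) = Term.var v

/-- one rewriting step of XRewrite (applied to `q`, producing `q'`) -/
def IsRewriteStep (Sig : Finset TGD) (W : Finset ℕ) (q q' : CQ) : Prop :=
  ∃ σ ∈ Sig, ∃ ρ : ℕ → ℕ, Function.Injective ρ ∧ (∀ v, ρ v ∉ q.vars) ∧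
    ∃ S : Finset Atom, Applicable q (σ.rename ρ) S ∧
      ∃ γ : Term → Term, IsMGU γ (S ∪ {(σ.rename ρ).head}) ∧
        IdOutside (varsOfSet (S ∪ {(σ.rename ρ).head})) γ ∧ ProtectsVars W γ ∧
        q' = (CQ.mk q.head ((q.body \ S) ∪ (σ.rename ρ).body)).subst γ

/-- one factorization step of XRewrite -/
def IsFactStep (Sig : Finset TGD) (W : Finset ℕ) (q q' : CQ) : Prop :=
  ∃ σ ∈ Sig, ∃ S : Finset Atom, Factorizable q σ S ∧
    ∃ γ : Term → Term, IsMGU γ S ∧ IdOutside (varsOfSet S) γ ∧ ProtectsVars W γ ∧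
      q' = q.subst γ

/-- the CQs obtainable from q by a finite sequence of rewriting and
factorization steps -/
inductive Reach (Sig : Finset TGD) (W : Finset ℕ) (q : CQ) : CQ → Prop
  | refl : Reach Sig W q q
  | rw {p p' : CQ} : Reach Sig W q p → IsRewriteStep Sig W p p' → Reach Sig W q p'
  | fact {p p' : CQ} : Reach Sig W q p → IsFactStep Sig W p p' → Reach Sig W q p'

/-- the output of XRewrite(q,Σ): q together with all CQs obtainable from q by a
finite sequence of rewriting and factorization steps whose last step is a
rewriting step -/
def XRewriteOut (Sig : Finset TGD) (W : Finset ℕ) (q : CQ) : Set CQ :=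
  {q} ∪ { p' | ∃ p : CQ, Reach Sig W q p ∧ IsRewriteStep Sig W p p' }

/-- two CQs are the same up to bijective variable renaming -/
def CQEquiv (p p' : CQ) : Prop :=
  ∃ ρ : ℕ → ℕ, Function.Bijective ρ ∧ p.subst (renT ρ) = p'

/-- the SMarking procedure: `Marked Sig σ v` says that the body variable `v` of
σ gets marked -/
inductive Marked (Sig : Finset TGD) : TGD → ℕ → Prop
  | init {σ : TGD} {v : ℕ} : σ ∈ Sig → v ∈ varsOfSet σ.body → v ∉ σ.head.vars →
      Marked Sig σ v
  | prop {σ σ' : TGD} {v : ℕ} (b : Atom) (u : ℕ → ℕ) : σ ∈ Sig → σ' ∈ Sig →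
      v ∈ varsOfSet σ.body → v ∈ σ.head.vars → b ∈ σ'.body →
      (∀ i : ℕ, σ.head.args[i]? = some (Term.var v) →
        b.args[i]? = some (Term.var (u i))) →
      (∀ i : ℕ, σ.head.args[i]? = some (Term.var v) → Marked Sig σ' (u i)) →
      Marked Sig σ v

/-- a set of TGDs is sticky if every marked variable occurs only once in the
body of its TGD -/
def Sticky (Sig : Finset TGD) : Prop :=
  ∀ σ ∈ Sig, ∀ v : ℕ, Marked Sig σ v → (∑ a ∈ σ.body, a.countVar v) = 1

/- ## Propagation graph and atom coverage -/

/-- a position of a schema: a predicate together with an argument index -/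
abbrev Pos := ℕ × ℕ

/-- the edges of the propagation graph -/
def PGEdge (σ : TGD) (pb ph : Pos) : Prop :=
  ∃ b ∈ σ.body, ∃ v : ℕ,
    b.pred = pb.1 ∧ b.args[pb.2]? = some (Term.var v) ∧
    σ.head.pred = ph.1 ∧ σ.head.args[ph.2]? = some (Term.var v)

/-- `vs` is a path in the propagation graph of Σ with edge labels `ls` -/
def IsPath (Sig : Finset TGD) (vs : List Pos) (ls : List TGD) : Prop :=
  vs.length = ls.length + 1 ∧
  ∀ j < ls.length, ∃ σ pb ph,
    ls[j]? = some σ ∧ vs[j]? = some pb ∧ vs[j + 1]? = some ph ∧ σ ∈ Sig ∧ PGEdge σ pb ph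

/-- a minimal path: no cycle is traversed twice consecutively -/
def MinimalPath (Sig : Finset TGD) (vs : List Pos) (ls : List TGD) : Prop :=
  IsPath Sig vs ls ∧
  ¬ ∃ i j : ℕ, 0 < i ∧ i + 1 < vs.length ∧ 0 < j ∧ j ≤ i ∧ i + j < vs.length ∧
      (∀ k ≤ j, vs[i - j + k]? = vs[i + k]?) ∧ ∀ k < j, ls[i - j + k]? = ls[i + k]?

/-- a tight sequence of (linear) TGDs -/
def TightSeq (σs : List TGD) : Prop :=
  ∀ j, j + 1 < σs.length →
    ∃ σ1 σ2, σs[j]? = some σ1 ∧ σs[j + 1]? = some σ2 ∧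
      ∃ h : Term → Term, constFix h ∧ σ2.body.image (Atom.subst h) = {σ1.head}

/-- a sequence of TGDs compatible to an atom -/
def CompatibleTo (σs : List TGD) (a : Atom) : Prop :=
  ∃ σ1, σs[0]? = some σ1 ∧ ∃ h : Term → Term, constFix h ∧
    σ1.body.image (Atom.subst h) = {a}

/-- pos(a,t): the positions (indices) at which the term t occurs in the atom a -/
def atomPos (a : Atom) (t : Term) : Set ℕ := { i | a.args[i]? = some t }

/-- T(q,a): the constants of a together with the variables of a shared in q -/
def Tq (q : CQ) (a : Atom) : Set Term :=
  { t | t ∈ a.args ∧ ((∃ c, t = Term.const c) ∨ ∃ v, t = Term.var v ∧ q.shared v) }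

/-- atom coverage: a covers b w.r.t. q and Σ -/
def Covers (Sig : Finset TGD) (q : CQ) (a b : Atom) : Prop :=
  (∀ t ∈ Tq q b, t ∈ a.args) ∧
  ∃ σs : List TGD, σs ≠ [] ∧ (∀ σ ∈ σs, σ ∈ Sig) ∧ TightSeq σs ∧ CompatibleTo σs a ∧
    ∀ t ∈ Tq q b, ∀ i ∈ atomPos b t,
      ∃ vs : List Pos, MinimalPath Sig vs σs ∧
        (∃ p0 : Pos, vs[0]? = some p0 ∧ p0.1 = a.pred ∧ p0.2 ∈ atomPos a t) ∧
        vs[vs.length - 1]? = some (b.pred, i)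


/-- the affected positions of the schema w.r.t. the pair ⟨σ,Σ⟩ -/
inductive AffectedPos (Sig : Finset TGD) (σ : TGD) : Pos → Prop
  | base {i : ℕ} : σ.exPos i → AffectedPos Sig σ (σ.head.pred, i)
  | step {σ' : TGD} {i v : ℕ} : σ' ∈ Sig →
      σ'.head.args[i]? = some (Term.var v) → v ∈ varsOfSet σ'.body →
      (∀ b ∈ σ'.body, ∀ j : ℕ, b.args[j]? = some (Term.var v) →
        AffectedPos Sig σ (b.pred, j)) →
      AffectedPos Sig σ (σ'.head.pred, i)

/-- the variable v occurs in body(q) only at positions affected w.r.t. ⟨σ,Σ⟩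
for some σ ∈ Σ -/
def OnlyAffectedVar (Sig : Finset TGD) (q : CQ) (v : ℕ) : Prop :=
  ∃ σ ∈ Sig, ∀ a ∈ q.body, ∀ j : ℕ, a.args[j]? = some (Term.var v) →
    AffectedPos Sig σ (a.pred, j)

/-- an existential-join decomposition of q w.r.t. Σ: a partition of body(q) such
that every variable occurring only at affected positions lies in a single block -/
def ExJoinDecomp (Sig : Finset TGD) (q : CQ) (P : Finset (Finset Atom)) : Prop :=
  (∀ S ∈ P, S.Nonempty) ∧ (∀ S ∈ P, S ⊆ q.body) ∧
  (∀ a ∈ q.body, ∃! S : Finset Atom, S ∈ P ∧ a ∈ S) ∧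
  ∀ v ∈ varsOfSet q.body, OnlyAffectedVar Sig q v →
    ∃ S ∈ P, v ∈ varsOfSet S ∧ ∀ S' ∈ P, S' ≠ S → v ∉ varsOfSet S'

/-- an optimal existential-join decomposition: no block can be split -/
def OptimalDecomp (Sig : Finset TGD) (q : CQ) (P : Finset (Finset Atom)) : Prop :=
  ExJoinDecomp Sig q P ∧
  ¬ ∃ S ∈ P, ∃ S₁ S₂ : Finset Atom, S₁.Nonempty ∧ S₂.Nonempty ∧
      Disjoint S₁ S₂ ∧ S₁ ∪ S₂ = S ∧
      ExJoinDecomp Sig q (P.erase S ∪ {S₁, S₂})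

/-- the head variables of the component S: the variables of S that are
distinguished in q or occur in body(q) outside S (in a fixed order) -/
def compHeadVars (q : CQ) (S : Finset Atom) : List ℕ :=
  (varsOfSet S ∩ (q.head.vars ∪ varsOfSet (q.body \ S))).sort (· ≤ ·)

/-- the component CQ q_i : p_i(f_i) ← C_i, where the fresh predicate p_i is
assigned by `pid` -/
def compCQ (q : CQ) (pid : Finset Atom → ℕ) (S : Finset Atom) : CQ :=
  ⟨⟨pid S, (compHeadVars q S).map Term.var⟩, S⟩

/-- a simultaneous unifier for a finite set of pairs of atoms -/
def IsUnifPairs (θ : Term → Term) (prs : Finset (Atom × Atom)) : Prop :=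
  constFix θ ∧ ∀ pr ∈ prs, Atom.subst θ pr.1 = Atom.subst θ pr.2

def IsMGUPairs (θ : Term → Term) (prs : Finset (Atom × Atom)) : Prop :=
  IsUnifPairs θ prs ∧ ∀ θ', IsUnifPairs θ' prs → ∃ δ : Term → Term, ∀ t, θ' t = δ (θ t)

/-- the output of XRewriteParallel: the UCQ obtained by unfolding the
non-recursive Datalog query consisting of the rewritings of the components
together with the reconciliation rule p(X) ← p_1(f_1),…,p_m(f_m) -/
def ParallelOut (Sig : Finset TGD) (q : CQ) (P : Finset (Finset Atom))
    (pid : Finset Atom → ℕ) : Set CQ :=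
  { q' | ∃ (c : Finset Atom → CQ) (ρ : Finset Atom → ℕ → ℕ) (θ : Term → Term),
      (∀ S ∈ P, c S ∈ XRewriteOut Sig ∅ (compCQ q pid S)) ∧
      (∀ S ∈ P, Function.Injective (ρ S)) ∧
      (∀ S ∈ P, ∀ v, ρ S v ∉ q.vars) ∧
      (∀ S ∈ P, ∀ S' ∈ P, S ≠ S' → ∀ v u, ρ S v ≠ ρ S' u) ∧
      IsMGUPairs θ (P.image fun S =>
        (Atom.subst (renT (ρ S)) (c S).head, (compCQ q pid S).head)) ∧
      q' = CQ.mk (q.head.subst θ)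
        (P.sup fun S => Finset.image (Atom.subst θ)
          ((c S).body.image (Atom.subst (renT (ρ S))))) }


/-! ### Development: basic lemmas -/

open Classical
noncomputable section

namespace Atom

theorem subst_pred (f : Term → Term) (a : Atom) : (a.subst f).pred = a.pred := rfl

theorem subst_args (f : Term → Term) (a : Atom) : (a.subst f).args = a.args.map f := rfl

theorem subst_subst (f g : Term → Term) (a : Atom) :
    (a.subst g).subst f = a.subst (fun t => f (g t)) := by
  simp [Atom.subst, List.map_map, Function.comp]

theorem subst_getElem? (f : Term → Term) (a : Atom) (i : ℕ) :
    (a.subst f).args[i]? = (a.args[i]?).map f := by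
  simp [Atom.subst]

theorem subst_congr {f g : Term → Term} {a : Atom} (h : ∀ t ∈ a.args, f t = g t) :
    a.subst f = a.subst g := by
  simp only [Atom.subst, Atom.mk.injEq, true_and]
  exact List.map_congr_left h

theorem mem_vars {a : Atom} {v : ℕ} : v ∈ a.vars ↔ Term.var v ∈ a.args := by
  simp only [Atom.vars, List.mem_toFinset, List.mem_filterMap]
  constructor
  · rintro ⟨t, ht, he⟩
    cases t <;> simp_all
  · intro h; exact ⟨Term.var v, h, rfl⟩

theorem subst_len (f : Term → Term) (a : Atom) :
    (a.subst f).args.length = a.args.length := by simp [Atom.subst]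

end Atom

theorem mem_varsOfSet {S : Finset Atom} {v : ℕ} :
    v ∈ varsOfSet S ↔ ∃ a ∈ S, v ∈ a.vars := by
  simp [varsOfSet, Finset.mem_sup]

theorem constFix.comp {f g : Term → Term} (hf : constFix f) (hg : constFix g) :
    constFix (fun t => f (g t)) := fun c => by show f (g (Term.const c)) = _; rw [hg, hf]

theorem eq_of_some_eq {α} {a b : α} (h : some a = some b) : a = b := by injection h

/-- atoms equal under subst iff preds equal and argwise images equal -/
theorem atom_eq_iff {a b : Atom} : a = b ↔ a.pred = b.pred ∧ a.args = b.args := by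
  cases a; cases b; simp

theorem atom_subst_eq_iff {f : Term → Term} {a b : Atom} :
    a.subst f = b.subst f ↔ a.pred = b.pred ∧ a.args.map f = b.args.map f := by
  rw [atom_eq_iff]; rfl

theorem getElem?_some_of_lt {l : List Term} {i : ℕ} (h : i < l.length) :
    ∃ t, l[i]? = some t := ⟨l[i], List.getElem?_eq_getElem h⟩

theorem mem_of_getElem? {α} {l : List α} {i : ℕ} {t : α} (h : l[i]? = some t) :
    t ∈ l := List.mem_of_getElem? h

/-- two distinct positions holding the same value give count ≥ 2 -/
theorem two_le_count_of_getElem? {α} [DecidableEq α] :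
    ∀ (l : List α) (i j : ℕ) (x : α), l[i]? = some x → l[j]? = some x → i ≠ j →
      2 ≤ l.count x := by
  intro l
  induction l with
  | nil => intro i j x h; simp at h
  | cons a l ih =>
    intro i j x hi hj hij
    match i, j with
    | 0, 0 => exact absurd rfl hij
    | 0, (j+1) =>
      simp only [List.getElem?_cons_zero] at hi
      simp only [List.getElem?_cons_succ] at hj
      have hx : x ∈ l := mem_of_getElem? hj
      have : 1 ≤ l.count x := List.one_le_count_iff.mpr hx
      have := eq_of_some_eq hi
      subst this
      simp only [List.count_cons, beq_self_eq_true, if_true]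
      omega
    | (i+1), 0 =>
      simp only [List.getElem?_cons_zero] at hj
      simp only [List.getElem?_cons_succ] at hi
      have hx : x ∈ l := mem_of_getElem? hi
      have : 1 ≤ l.count x := List.one_le_count_iff.mpr hx
      have := eq_of_some_eq hj
      subst this
      simp only [List.count_cons, beq_self_eq_true, if_true]
      omega
    | (i+1), (j+1) =>
      simp only [List.getElem?_cons_succ] at hi hj
      have := ih i j x hi hj (by omega)
      have hle : l.count x ≤ (a :: l).count x := by
        simp only [List.count_cons]; omega
      omega

theorem noNull_cases {t : Term} (h : t.noNull) :
    (∃ c, t = Term.const c) ∨ ∃ v, t = Term.var v := by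
  cases t with
  | const c => exact Or.inl ⟨c, rfl⟩
  | null n => exact absurd h (by simp [Term.noNull])
  | var v => exact Or.inr ⟨v, rfl⟩


/-! ### Part 1: canonical solutions of term-equation systems, MGU existence -/

/-- a system of term equations -/
def SolE (E : Set (Term × Term)) (θ : Term → Term) : Prop :=
  constFix θ ∧ ∀ p ∈ E, θ p.1 = θ p.2

def TermsOfE (E : Set (Term × Term)) : Set Term := {t | ∃ p ∈ E, t = p.1 ∨ t = p.2}

def ERel (E : Set (Term × Term)) (t s : Term) : Prop :=
  ∀ θ, SolE E θ → θ t = θ s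

namespace ERel

variable {E : Set (Term × Term)}

theorem refl (t : Term) : ERel E t t := fun _ _ => rfl

theorem symm {t s : Term} (h : ERel E t s) : ERel E s t := fun θ hθ => (h θ hθ).symm

theorem trans {t s u : Term} (h : ERel E t s) (h' : ERel E s u) : ERel E t u :=
  fun θ hθ => (h θ hθ).trans (h' θ hθ)

theorem of_mem {p : Term × Term} (hp : p ∈ E) : ERel E p.1 p.2 := fun _ hθ => hθ.2 p hp

theorem const_unique (hsol : ∃ θ, SolE E θ) {t : Term} {c c' : ℕ}
    (h : ERel E t (Term.const c)) (h' : ERel E t (Term.const c')) : c = c' := by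
  obtain ⟨θ, hθ⟩ := hsol
  have := (h θ hθ).symm.trans (h' θ hθ)
  rw [hθ.1, hθ.1] at this
  injection this

end ERel

/-- the canonical representative function of the system E -/
noncomputable def erep (E : Set (Term × Term)) (t : Term) : Term :=
  if h : ∃ c, ERel E t (Term.const c) then Term.const h.choose
  else if h2 : ∃ v, ERel E t (Term.var v) then Term.var (sInf {v | ERel E t (Term.var v)})
  else Term.null (sInf {n | ERel E t (Term.null n)})

section erep

variable {E : Set (Term × Term)} (hsol : ∃ θ, SolE E θ)

theorem erep_rel (t : Term) : ERel E t (erep E t) := by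
  unfold erep
  split_ifs with h1 h2
  · exact h1.choose_spec
  · have hne : {v | ERel E t (Term.var v)}.Nonempty := h2
    exact Nat.sInf_mem hne
  · have hne : {n | ERel E t (Term.null n)}.Nonempty := by
      cases t with
      | const c => exact absurd ⟨c, ERel.refl _⟩ h1
      | var v => exact absurd ⟨v, ERel.refl _⟩ h2
      | null n => exact ⟨n, ERel.refl _⟩
    exact Nat.sInf_mem hne

include hsol in
theorem erep_congr {t s : Term} (h : ERel E t s) : erep E t = erep E s := by
  have hset2 : {v | ERel E t (Term.var v)} = {v | ERel E s (Term.var v)} := by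
    ext v; exact ⟨fun hc => (h.symm).trans hc, fun hc => h.trans hc⟩
  have hset3 : {n | ERel E t (Term.null n)} = {n | ERel E s (Term.null n)} := by
    ext n; exact ⟨fun hc => (h.symm).trans hc, fun hc => h.trans hc⟩
  by_cases h1 : ∃ c, ERel E t (Term.const c)
  · have h1' : ∃ c, ERel E s (Term.const c) := ⟨h1.choose, h.symm.trans h1.choose_spec⟩
    rw [erep, erep, dif_pos h1, dif_pos h1']
    exact congrArg Term.const
      (ERel.const_unique hsol h1.choose_spec (h.trans h1'.choose_spec))
  · have h1' : ¬ ∃ c0, ERel E s (Term.const c0) := by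
      rintro ⟨c, hc⟩; exact h1 ⟨c, h.trans hc⟩
    by_cases h2 : ∃ v, ERel E t (Term.var v)
    · have h2' : ∃ v, ERel E s (Term.var v) := ⟨h2.choose, h.symm.trans h2.choose_spec⟩
      rw [erep, erep, dif_neg h1, dif_neg h1', dif_pos h2, dif_pos h2', hset2]
    · have h2' : ¬ ∃ v, ERel E s (Term.var v) := by
        rintro ⟨v, hv⟩; exact h2 ⟨v, h.trans hv⟩
      rw [erep, erep, dif_neg h1, dif_neg h1', dif_neg h2, dif_neg h2', hset3]

include hsol in
theorem erep_const (c : ℕ) : erep E (Term.const c) = Term.const c := by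
  unfold erep
  have h1 : ∃ c', ERel E (Term.const c) (Term.const c') := ⟨c, ERel.refl _⟩
  rw [dif_pos h1]
  exact congrArg Term.const (ERel.const_unique hsol h1.choose_spec (ERel.refl _))

theorem erep_absorb {θ : Term → Term} (hθ : SolE E θ) (t : Term) :
    θ (erep E t) = θ t := ((erep_rel t) θ hθ).symm

include hsol in
theorem erep_sol : SolE E (erep E) := by
  refine ⟨fun c => erep_const hsol c, fun p hp => ?_⟩
  exact erep_congr hsol (ERel.of_mem hp)

include hsol in
theorem erep_var_outside {v : ℕ} (hv : Term.var v ∉ TermsOfE E) :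
    erep E (Term.var v) = Term.var v := by
  have key : ∀ s, ERel E (Term.var v) s → s = Term.var v := by
    intro s hs
    obtain ⟨θ, hθ⟩ := hsol
    by_contra hne
    have mk : ∀ c : ℕ, SolE E (fun u => if u = Term.var v then Term.const c else θ u) := by
      intro c
      constructor
      · intro c'; simp only [reduceCtorEq, if_false]; exact hθ.1 c'
      · intro p hp
        have h1 : p.1 ≠ Term.var v := fun he => hv ⟨p, hp, Or.inl he.symm⟩
        have h2 : p.2 ≠ Term.var v := fun he => hv ⟨p, hp, Or.inr he.symm⟩
        simp only [if_neg h1, if_neg h2]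
        exact hθ.2 p hp
    have e0 := hs _ (mk 0)
    have e1 := hs _ (mk 1)
    rw [if_pos rfl, if_neg hne] at e0
    rw [if_pos rfl, if_neg hne] at e1
    exact absurd (e0.trans e1.symm) (by decide)
  unfold erep
  have h1 : ¬ ∃ c, ERel E (Term.var v) (Term.const c) := by
    rintro ⟨c, hc⟩; exact absurd (key _ hc) (by simp)
  have h2 : ∃ u, ERel E (Term.var v) (Term.var u) := ⟨v, ERel.refl _⟩
  rw [dif_neg h1, dif_pos h2]
  have : {u | ERel E (Term.var v) (Term.var u)} = {v} := by
    ext u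
    constructor
    · intro hu
      have h := key _ hu
      have huv : u = v := by injection h
      simp [huv]
    · rintro rfl; exact ERel.refl _
  rw [this]
  simp

theorem erep_noNull_var (v : ℕ) : (erep E (Term.var v)).noNull := by
  unfold erep
  split_ifs with h1 h2
  · trivial
  · trivial
  · exact absurd ⟨v, ERel.refl _⟩ h2

include hsol in
theorem erep_noNull_of_noNull {t : Term} (ht : t.noNull) : (erep E t).noNull := by
  rcases noNull_cases ht with ⟨c, rfl⟩ | ⟨v, rfl⟩
  · rw [erep_const hsol]; trivial
  · exact erep_noNull_var v

end erep

/-! ### Part 2: MGU existence for atom sets and atom pairs -/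

def atomsE (S : Finset Atom) : Set (Term × Term) :=
  {pr | ∃ a ∈ S, ∃ b ∈ S, ∃ i : ℕ, a.args[i]? = some pr.1 ∧ b.args[i]? = some pr.2}

theorem IsUnifier.solE {θ : Term → Term} {S : Finset Atom} (h : IsUnifier θ S) :
    SolE (atomsE S) θ := by
  refine ⟨h.1, ?_⟩
  rintro ⟨t, s⟩ ⟨a, ha, b, hb, i, h1, h2⟩
  have harg := congrArg Atom.args (h.2 a ha b hb)
  simp only [Atom.subst] at harg
  have h3 := congrArg (fun l : List Term => l[i]?) harg
  simp only [List.getElem?_map, h1, h2, Option.map_some] at h3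
  exact eq_of_some_eq h3

theorem solE_unifier {θ₀ θ : Term → Term} {S : Finset Atom} (h0 : IsUnifier θ₀ S)
    (hθ : constFix θ) (hs : SolE (atomsE S) θ) : IsUnifier θ S := by
  refine ⟨hθ, ?_⟩
  intro a ha b hb
  have hp : a.pred = b.pred := by
    have := congrArg Atom.pred (h0.2 a ha b hb); simpa [Atom.subst] using this
  have hl : a.args.length = b.args.length := by
    have := congrArg (fun x : Atom => x.args.length) (h0.2 a ha b hb)
    simpa [Atom.subst] using this
  refine atom_eq_iff.mpr ⟨hp, ?_⟩
  apply List.ext_getElem?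
  intro i
  simp only [Atom.subst, List.getElem?_map]
  by_cases hi : i < a.args.length
  · obtain ⟨t, ht⟩ := getElem?_some_of_lt hi
    obtain ⟨s, hsi⟩ := getElem?_some_of_lt (l := b.args) (i := i) (hl ▸ hi)
    rw [ht, hsi]
    simp only [Option.map_some]
    exact congrArg some (hs.2 (t, s) ⟨a, ha, b, hb, i, ht, hsi⟩)
  · rw [List.getElem?_eq_none (by omega), List.getElem?_eq_none (by omega)]

theorem isUnifier_of_const_image {θ : Term → Term} {S : Finset Atom} {A : Atom}
    (hcf : constFix θ) (h : ∀ a ∈ S, a.subst θ = A) : IsUnifier θ S :=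
  ⟨hcf, fun a ha b hb => (h a ha).trans (h b hb).symm⟩

theorem exists_good_mgu {S : Finset Atom} (h : Unifies S) :
    ∃ γ : Term → Term, IsMGU γ S ∧ IdOutside (varsOfSet S) γ ∧
      (∀ θ, IsUnifier θ S → ∀ t, θ (γ t) = θ t) ∧
      (∀ t, t.noNull → (γ t).noNull) := by
  obtain ⟨θ₀, hθ₀⟩ := h
  have hsol : ∃ θ, SolE (atomsE S) θ := ⟨θ₀, hθ₀.solE⟩
  set γ := erep (atomsE S) with hγ
  have hγsol : SolE (atomsE S) γ := erep_sol hsol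
  have hunif : IsUnifier γ S := solE_unifier hθ₀ hγsol.1 hγsol
  have habs : ∀ θ, IsUnifier θ S → ∀ t, θ (γ t) = θ t := fun θ hθ t =>
    erep_absorb hθ.solE t
  refine ⟨γ, ⟨hunif, ?_⟩, ?_, habs, ?_⟩
  · intro θ' hθ'
    exact ⟨θ', fun t => (habs θ' hθ' t).symm⟩
  · intro v hv
    apply erep_var_outside hsol
    rintro ⟨⟨t, s⟩, ⟨a, ha, b, hb, i, h1, h2⟩, hor⟩
    rcases hor with he | he
    · apply hv; rw [mem_varsOfSet]
      exact ⟨a, ha, Atom.mem_vars.mpr (by rw [he]; exact mem_of_getElem? h1)⟩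
    · apply hv; rw [mem_varsOfSet]
      exact ⟨b, hb, Atom.mem_vars.mpr (by rw [he]; exact mem_of_getElem? h2)⟩
  · intro t ht; exact erep_noNull_of_noNull hsol ht

/-! pairs version -/

def pairsE (prs : Finset (Atom × Atom)) : Set (Term × Term) :=
  {pr | ∃ pq ∈ prs, ∃ i : ℕ, pq.1.args[i]? = some pr.1 ∧ pq.2.args[i]? = some pr.2}

theorem IsUnifPairs.solE {θ : Term → Term} {prs : Finset (Atom × Atom)}
    (h : IsUnifPairs θ prs) : SolE (pairsE prs) θ := by
  refine ⟨h.1, ?_⟩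
  rintro ⟨t, s⟩ ⟨pq, hpq, i, h1, h2⟩
  have harg := congrArg Atom.args (h.2 pq hpq)
  simp only [Atom.subst] at harg
  have h3 := congrArg (fun l : List Term => l[i]?) harg
  simp only [List.getElem?_map, h1, h2, Option.map_some] at h3
  exact eq_of_some_eq h3

theorem solE_unifPairs {θ₀ θ : Term → Term} {prs : Finset (Atom × Atom)}
    (h0 : IsUnifPairs θ₀ prs) (hθ : constFix θ) (hs : SolE (pairsE prs) θ) :
    IsUnifPairs θ prs := by
  refine ⟨hθ, ?_⟩
  intro pq hpq
  have hp : pq.1.pred = pq.2.pred := by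
    have := congrArg Atom.pred (h0.2 pq hpq); simpa [Atom.subst] using this
  have hl : pq.1.args.length = pq.2.args.length := by
    have := congrArg (fun x : Atom => x.args.length) (h0.2 pq hpq)
    simpa [Atom.subst] using this
  refine atom_eq_iff.mpr ⟨hp, ?_⟩
  apply List.ext_getElem?
  intro i
  simp only [Atom.subst, List.getElem?_map]
  by_cases hi : i < pq.1.args.length
  · obtain ⟨t, ht⟩ := getElem?_some_of_lt hi
    obtain ⟨s, hsi⟩ := getElem?_some_of_lt (l := pq.2.args) (i := i) (hl ▸ hi)
    rw [ht, hsi]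
    simp only [Option.map_some]
    exact congrArg some (hs.2 (t, s) ⟨pq, hpq, i, ht, hsi⟩)
  · rw [List.getElem?_eq_none (by omega), List.getElem?_eq_none (by omega)]

theorem exists_good_mgu_pairs {prs : Finset (Atom × Atom)} (h : ∃ θ, IsUnifPairs θ prs) :
    ∃ θ : Term → Term, IsMGUPairs θ prs ∧
      (∀ θ', IsUnifPairs θ' prs → ∀ t, θ' (θ t) = θ' t) := by
  obtain ⟨θ₀, hθ₀⟩ := h
  have hsol : ∃ θ, SolE (pairsE prs) θ := ⟨θ₀, hθ₀.solE⟩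
  set θ := erep (pairsE prs) with hθdef
  have hθsol : SolE (pairsE prs) θ := erep_sol hsol
  have hunif : IsUnifPairs θ prs := solE_unifPairs hθ₀ hθsol.1 hθsol
  have habs : ∀ θ', IsUnifPairs θ' prs → ∀ t, θ' (θ t) = θ' t := fun θ' hθ' t =>
    erep_absorb hθ'.solE t
  exact ⟨θ, ⟨hunif, fun θ' hθ' => ⟨θ', fun t => (habs θ' hθ' t).symm⟩⟩, habs⟩

/-! ### Part 3: null-swapping and null-freeness of reachable queries -/

theorem CQ.subst_head (q : CQ) (f : Term → Term) : (q.subst f).head = q.head.subst f := rfl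

theorem CQ.subst_body (q : CQ) (f : Term → Term) :
    (q.subst f).body = q.body.image (Atom.subst f) := rfl

theorem CQ.subst_subst (q : CQ) (f g : Term → Term) :
    (q.subst g).subst f = q.subst (fun t => f (g t)) := by
  unfold CQ.subst
  simp only [CQ.mk.injEq]
  constructor
  · exact Atom.subst_subst f g q.head
  · rw [Finset.image_image]
    apply Finset.image_congr
    intro a _
    exact Atom.subst_subst f g a

def swapNull (n k : ℕ) : Term → Term := fun t =>
  if t = Term.null n then Term.null k else if t = Term.null k then Term.null n else t

theorem swapNull_invol (n k : ℕ) (t : Term) : swapNull n k (swapNull n k t) = t := by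
  unfold swapNull
  split_ifs with h1 h2 <;> simp_all <;> split_ifs <;> simp_all

theorem swapNull_constFix (n k : ℕ) : constFix (swapNull n k) := by
  intro c; unfold swapNull; simp

theorem swapNull_var (n k v : ℕ) : swapNull n k (Term.var v) = Term.var v := by
  unfold swapNull; simp

theorem protects_empty (γ : Term → Term) : ProtectsVars ∅ γ := by
  intro v hv; exact absurd hv (Finset.notMem_empty v)

/-- the labeled nulls occurring in an atom / CQ -/
def Atom.nulls (a : Atom) : Finset ℕ :=
  (a.args.filterMap (fun t => match t with | .null n => some n | _ => none)).toFinset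

theorem Atom.mem_nulls {a : Atom} {n : ℕ} : n ∈ a.nulls ↔ Term.null n ∈ a.args := by
  simp only [Atom.nulls, List.mem_toFinset, List.mem_filterMap]
  constructor
  · rintro ⟨t, ht, he⟩; cases t <;> simp_all
  · intro h; exact ⟨Term.null n, h, rfl⟩

def CQ.nulls (q : CQ) : Finset ℕ := q.head.nulls ∪ q.body.sup Atom.nulls

theorem CQ.mem_nulls {q : CQ} {n : ℕ} :
    n ∈ q.nulls ↔ Term.null n ∈ q.head.args ∨ ∃ a ∈ q.body, Term.null n ∈ a.args := by
  simp only [CQ.nulls, Finset.mem_union, Atom.mem_nulls, Finset.mem_sup]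

/-- non-null-freeness yields a null -/
theorem exists_null_of_not_nf {q : CQ}
    (h : ¬ ((∀ t ∈ q.head.args, t.noNull) ∧ ∀ a ∈ q.body, ∀ t ∈ a.args, t.noNull)) :
    ∃ n, n ∈ q.nulls := by
  rw [not_and_or] at h
  rcases h with h | h
  · push_neg at h
    obtain ⟨t, ht, hnn⟩ := h
    cases t with
    | null n => exact ⟨n, CQ.mem_nulls.mpr (Or.inl ht)⟩
    | const c => exact absurd trivial hnn
    | var v => exact absurd trivial hnn
  · push_neg at h
    obtain ⟨a, ha, t, ht, hnn⟩ := h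
    cases t with
    | null n => exact ⟨n, CQ.mem_nulls.mpr (Or.inr ⟨a, ha, ht⟩)⟩
    | const c => exact absurd trivial hnn
    | var v => exact absurd trivial hnn

theorem renT_nulls (ρ : ℕ → ℕ) (q : CQ) : (q.subst (renT ρ)).nulls = q.nulls := by
  have atomlem : ∀ a : Atom, (a.subst (renT ρ)).nulls = a.nulls := by
    intro a
    ext n
    simp only [Atom.mem_nulls, Atom.subst, List.mem_map]
    constructor
    · rintro ⟨t, ht, he⟩
      cases t with
      | null m => simp only [renT] at he; rwa [he] at ht
      | const c => simp [renT] at he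
      | var v => simp [renT] at he
    · intro h; exact ⟨Term.null n, h, rfl⟩
  ext n
  simp only [CQ.mem_nulls, CQ.subst_head, CQ.subst_body, Finset.mem_image]
  rw [← Atom.mem_nulls, atomlem, Atom.mem_nulls]
  constructor
  · rintro (h | ⟨a', ⟨a, ha, rfl⟩, h⟩)
    · exact Or.inl h
    · exact Or.inr ⟨a, ha, by rwa [← Atom.mem_nulls, atomlem, Atom.mem_nulls] at h⟩
  · rintro (h | ⟨a, ha, h⟩)
    · exact Or.inl h
    · exact Or.inr ⟨a.subst (renT ρ), ⟨a, ha, rfl⟩,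
        by rwa [← Atom.mem_nulls, atomlem, Atom.mem_nulls]⟩

theorem CQEquiv.nulls_eq {p p' : CQ} (h : CQEquiv p p') : p.nulls = p'.nulls := by
  obtain ⟨ρ, _, rfl⟩ := h
  exact (renT_nulls ρ p).symm

theorem swap_mem_nulls {q : CQ} {n k : ℕ} (h : n ∈ q.nulls) :
    k ∈ (q.subst (swapNull n k)).nulls := by
  have hsw : swapNull n k (Term.null n) = Term.null k := by unfold swapNull; simp
  rw [CQ.mem_nulls] at h ⊢
  rcases h with h | ⟨a, ha, hm⟩
  · exact Or.inl (by rw [CQ.subst_head, ← hsw]; exact List.mem_map_of_mem (f := _) h)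
  · exact Or.inr ⟨a.subst (swapNull n k), Finset.mem_image_of_mem _ ha,
      by rw [← hsw]; exact List.mem_map_of_mem (f := _) hm⟩

theorem swap_mem_nulls_rev {q : CQ} {n k m : ℕ} (hm : m ∈ (q.subst (swapNull n k)).nulls)
    (h1 : m ≠ k) (h2 : m ≠ n) : m ∈ q.nulls := by
  have key : ∀ t, swapNull n k t = Term.null m → t = Term.null m := by
    intro t ht
    unfold swapNull at ht
    split_ifs at ht with a1 a2
    · exact absurd (by injection ht) h1.symm
    · exact absurd (by injection ht) h2.symm
    · exact ht
  rw [CQ.mem_nulls] at hm ⊢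
  rcases hm with h | ⟨a', ha', hmem⟩
  · rw [CQ.subst_head] at h
    obtain ⟨t, ht, he⟩ := List.mem_map.mp h
    exact Or.inl (by rwa [key t he] at ht)
  · rw [CQ.subst_body] at ha'
    obtain ⟨a, ha, rfl⟩ := Finset.mem_image.mp ha'
    obtain ⟨t, ht, he⟩ := List.mem_map.mp hmem
    exact Or.inr ⟨a, ha, by rwa [key t he] at ht⟩

theorem IsMGU.swap {γ : Term → Term} {S : Finset Atom} (h : IsMGU γ S) (n k : ℕ) :
    IsMGU (fun t => swapNull n k (γ t)) S := by
  obtain ⟨⟨hcf, huni⟩, hfac⟩ := h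
  refine ⟨⟨constFix.comp (swapNull_constFix n k) hcf, ?_⟩, ?_⟩
  · intro a ha b hb
    have hc : ∀ x : Atom, Atom.subst (fun t => swapNull n k (γ t)) x =
        Atom.subst (swapNull n k) (Atom.subst γ x) := fun x => (Atom.subst_subst _ _ x).symm
    rw [hc a, hc b, huni a ha b hb]
  · intro θ' hθ'
    obtain ⟨δ, hδ⟩ := hfac θ' hθ'
    exact ⟨fun t => δ (swapNull n k t), fun t => by
      simp only [swapNull_invol]; exact hδ t⟩

theorem IsRewriteStep.swap {Sig : Finset TGD} {p p₁ : CQ}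
    (h : IsRewriteStep Sig ∅ p p₁) (n k : ℕ) :
    IsRewriteStep Sig ∅ p (p₁.subst (swapNull n k)) := by
  obtain ⟨σ, hσ, ρ, hinj, hfr, S, happ, γ, hmgu, hid, _, heq⟩ := h
  refine ⟨σ, hσ, ρ, hinj, hfr, S, happ, fun t => swapNull n k (γ t), hmgu.swap n k,
    ?_, protects_empty _, ?_⟩
  · intro v hv
    show swapNull n k (γ (Term.var v)) = _
    rw [hid v hv, swapNull_var]
  · rw [heq, CQ.subst_subst]

theorem IsFactStep.swap {Sig : Finset TGD} {p p₁ : CQ}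
    (h : IsFactStep Sig ∅ p p₁) (n k : ℕ) :
    IsFactStep Sig ∅ p (p₁.subst (swapNull n k)) := by
  obtain ⟨σ, hσ, S, hfact, γ, hmgu, hid, _, heq⟩ := h
  refine ⟨σ, hσ, S, hfact, fun t => swapNull n k (γ t), hmgu.swap n k, ?_,
    protects_empty _, ?_⟩
  · intro v hv
    show swapNull n k (γ (Term.var v)) = _
    rw [hid v hv, swapNull_var]
  · rw [heq, CQ.subst_subst]

/-- under termination-up-to-renaming, a query with a null cannot arise -/
theorem swap_family_contra {Sig : Finset TGD} {q₀ p₁ : CQ} {n : ℕ}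
    (hfin : ∃ Q : Finset CQ, ∀ p, Reach Sig ∅ q₀ p → ∃ p' ∈ Q, CQEquiv p p')
    (hmem : ∀ k, Reach Sig ∅ q₀ (p₁.subst (swapNull n k)))
    (hn : n ∈ p₁.nulls) : False := by
  obtain ⟨Q, hQ⟩ := hfin
  classical
  set B : Finset ℕ := insert n p₁.nulls with hB
  set N : ℕ := B.card + Q.card + 1 with hN
  set F : Finset ℕ := (Finset.range N).filter (fun k => k ∉ B) with hF
  have hcard : Q.card < F.card := by
    have h1 : ((Finset.range N).filter (fun k => k ∈ B)).card ≤ B.card := by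
      apply Finset.card_le_card
      intro x hx
      exact (Finset.mem_filter.mp hx).2
    have h2 := Finset.card_filter_add_card_filter_not
      (s := Finset.range N) (p := fun k => k ∈ B)
    rw [Finset.card_range] at h2
    have : ((Finset.range N).filter (fun k => ¬ k ∈ B)).card = F.card := rfl
    omega
  have hex : ∀ k, ∃ r, r ∈ Q ∧ CQEquiv (p₁.subst (swapNull n k)) r := by
    intro k
    obtain ⟨r, hr, he⟩ := hQ _ (hmem k)
    exact ⟨r, hr, he⟩
  choose g hgQ hgE using hex
  obtain ⟨k, hk, k', hk', hne, hgeq⟩ :=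
    Finset.exists_ne_map_eq_of_card_lt_of_maps_to hcard (fun k _ => hgQ k)
  have hkB : k ∉ B := (Finset.mem_filter.mp hk).2
  have hk'B : k' ∉ B := (Finset.mem_filter.mp hk').2
  have e1 : (p₁.subst (swapNull n k)).nulls = (p₁.subst (swapNull n k')).nulls := by
    rw [(hgE k).nulls_eq, hgeq, ← (hgE k').nulls_eq]
  have hkmem : k ∈ (p₁.subst (swapNull n k)).nulls := swap_mem_nulls hn
  rw [e1] at hkmem
  have hkn : k ≠ n := fun he => hkB (he ▸ Finset.mem_insert_self n _)
  have := swap_mem_nulls_rev hkmem hne hkn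
  exact hkB (Finset.mem_insert_of_mem this)

/-- all queries reachable from a null-free query are null-free (using hterm) -/
theorem reach_nullFree {Sig : Finset TGD} {q₀ : CQ}
    (hfin : ∃ Q : Finset CQ, ∀ p, Reach Sig ∅ q₀ p → ∃ p' ∈ Q, CQEquiv p p')
    (h₀ : (∀ t ∈ q₀.head.args, t.noNull) ∧ ∀ a ∈ q₀.body, ∀ t ∈ a.args, t.noNull) :
    ∀ p, Reach Sig ∅ q₀ p →
      (∀ t ∈ p.head.args, t.noNull) ∧ ∀ a ∈ p.body, ∀ t ∈ a.args, t.noNull := by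
  intro p hre
  induction hre with
  | refl => exact h₀
  | @rw p p₁ hpre hstep _ =>
    by_contra hnf
    obtain ⟨n, hn⟩ := exists_null_of_not_nf hnf
    exact swap_family_contra hfin
      (fun k => Reach.rw hpre (hstep.swap n k)) hn
  | @fact p p₁ hpre hstep _ =>
    by_contra hnf
    obtain ⟨n, hn⟩ := exists_null_of_not_nf hnf
    exact swap_family_contra hfin
      (fun k => Reach.fact hpre (hstep.swap n k)) hn

/-! ### Part 4: soundness of rewriting/factorization steps -/

theorem renT_const (ρ : ℕ → ℕ) (c : ℕ) : renT ρ (Term.const c) = Term.const c := rfl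
theorem renT_null (ρ : ℕ → ℕ) (n : ℕ) : renT ρ (Term.null n) = Term.null n := rfl
theorem renT_var' (ρ : ℕ → ℕ) (v : ℕ) : renT ρ (Term.var v) = Term.var (ρ v) := rfl

theorem TGD.rename_head (σ : TGD) (ρ : ℕ → ℕ) :
    (σ.rename ρ).head = σ.head.subst (renT ρ) := rfl
theorem TGD.rename_body (σ : TGD) (ρ : ℕ → ℕ) :
    (σ.rename ρ).body = σ.body.image (Atom.subst (renT ρ)) := rfl

theorem Atom.vars_renT (ρ : ℕ → ℕ) (a : Atom) :
    (a.subst (renT ρ)).vars = a.vars.image ρ := by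
  ext v
  simp only [Atom.mem_vars, Finset.mem_image, Atom.subst, List.mem_map]
  constructor
  · rintro ⟨t, ht, he⟩
    cases t with
    | var u =>
      rw [renT_var'] at he
      have h2 : ρ u = v := by injection he
      exact ⟨u, ht, h2⟩
    | const c => simp [renT] at he
    | null m => simp [renT] at he
  · rintro ⟨u, hu, rfl⟩
    exact ⟨Term.var u, hu, rfl⟩

theorem varsOfSet_renT (ρ : ℕ → ℕ) (S : Finset Atom) :
    varsOfSet (S.image (Atom.subst (renT ρ))) = (varsOfSet S).image ρ := by
  ext v
  simp only [mem_varsOfSet, Finset.mem_image]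
  constructor
  · rintro ⟨a', ⟨a, ha, rfl⟩, hv⟩
    rw [Atom.vars_renT] at hv
    obtain ⟨u, hu, rfl⟩ := Finset.mem_image.mp hv
    exact ⟨u, ⟨a, ha, hu⟩, rfl⟩
  · rintro ⟨u, ⟨a, ha, hu⟩, rfl⟩
    exact ⟨a.subst (renT ρ), ⟨a, ha, rfl⟩,
      by rw [Atom.vars_renT]; exact Finset.mem_image_of_mem ρ hu⟩

theorem TGD.exVars_rename {ρ : ℕ → ℕ} (hinj : Function.Injective ρ) (σ : TGD) :
    (σ.rename ρ).exVars = σ.exVars.image ρ := by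
  unfold TGD.exVars
  rw [TGD.rename_head, TGD.rename_body, Atom.vars_renT, varsOfSet_renT,
    ← Finset.image_sdiff _ _ hinj]

theorem TGD.exPos_rename {ρ : ℕ → ℕ} (hinj : Function.Injective ρ) (σ : TGD) (i : ℕ) :
    (σ.rename ρ).exPos i ↔ σ.exPos i := by
  unfold TGD.exPos
  rw [TGD.exVars_rename hinj]
  constructor
  · rintro ⟨z, hz, hargs⟩
    obtain ⟨z₀, hz₀, rfl⟩ := Finset.mem_image.mp hz
    rw [TGD.rename_head, Atom.subst_getElem?] at hargs
    obtain ⟨t, ht, he⟩ := Option.map_eq_some_iff.mp hargs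
    cases t with
    | var u =>
      rw [renT_var'] at he
      injection he with he'
      have huz : u = z₀ := hinj he'
      exact ⟨z₀, hz₀, by rwa [huz] at ht⟩
    | const c => simp [renT] at he
    | null m => simp [renT] at he
  · rintro ⟨z, hz, hargs⟩
    refine ⟨ρ z, Finset.mem_image_of_mem ρ hz, ?_⟩
    rw [TGD.rename_head, Atom.subst_getElem?, hargs]
    rfl

/-! sharedness lemmas -/

theorem shared_of_two_atoms {p : CQ} {a b : Atom} {v : ℕ} (ha : a ∈ p.body)
    (hb : b ∈ p.body) (hab : a ≠ b) (hva : Term.var v ∈ a.args)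
    (hvb : Term.var v ∈ b.args) : p.shared v := by
  unfold CQ.shared CQ.countVar
  have h1 : 1 ≤ a.countVar v := List.one_le_count_iff.mpr hva
  have h2 : 1 ≤ b.countVar v := List.one_le_count_iff.mpr hvb
  have hsub : ({a, b} : Finset Atom) ⊆ p.body := by
    intro x hx
    rcases Finset.mem_insert.mp hx with rfl | hx
    · exact ha
    · rw [Finset.mem_singleton.mp hx]; exact hb
  have hpair : a.countVar v + b.countVar v ≤ ∑ x ∈ p.body, x.countVar v := by
    have h3 := Finset.sum_le_sum_of_subset (f := fun x => x.countVar v) hsub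
    rw [Finset.sum_pair hab] at h3
    exact h3
  omega

theorem shared_of_head_body {p : CQ} {b : Atom} {v : ℕ} (hh : Term.var v ∈ p.head.args)
    (hb : b ∈ p.body) (hvb : Term.var v ∈ b.args) : p.shared v := by
  unfold CQ.shared CQ.countVar
  have h1 : 1 ≤ p.head.countVar v := List.one_le_count_iff.mpr hh
  have h2 : 1 ≤ b.countVar v := List.one_le_count_iff.mpr hvb
  have : b.countVar v ≤ ∑ x ∈ p.body, x.countVar v :=
    Finset.single_le_sum (f := fun x => x.countVar v) (fun x _ => Nat.zero_le _) hb
  omega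

theorem shared_of_two_pos {p : CQ} {b : Atom} {v : ℕ} {i j : ℕ} (hb : b ∈ p.body)
    (hi : b.args[i]? = some (Term.var v)) (hj : b.args[j]? = some (Term.var v))
    (hij : i ≠ j) : p.shared v := by
  unfold CQ.shared CQ.countVar
  have h2 : 2 ≤ b.countVar v := two_le_count_of_getElem? b.args i j _ hi hj hij
  have : b.countVar v ≤ ∑ x ∈ p.body, x.countVar v :=
    Finset.single_le_sum (f := fun x => x.countVar v) (fun x _ => Nat.zero_le _) hb
  omega

/-- uniqueness of the existential position under normal form -/
theorem exPos_unique {σ : TGD} (hnf : σ.NormalForm) {i j : ℕ} (hi : σ.exPos i)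
    (hj : σ.exPos j) : i = j := by
  obtain ⟨z, hz, hzi⟩ := hi
  obtain ⟨z', hz', hzj⟩ := hj
  have hzz : z = z' := Finset.card_le_one.mp hnf.1 z hz z' hz'
  subst hzz
  by_contra hij
  have := two_le_count_of_getElem? σ.head.args i j _ hzi hzj hij
  have h1 := hnf.2 z hz
  unfold Atom.countVar at h1
  omega

/-- soundness of a single rewriting step -/
theorem rw_step_sound {Sig : Finset TGD} {I : Set Atom} (hsat : satSet Sig I)
    (hnf : ∀ σ ∈ Sig, σ.NormalForm)
    (hheadnn : ∀ σ ∈ Sig, ∀ t ∈ σ.head.args, t.noNull)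
    {p p₁ : CQ} (hstep : IsRewriteStep Sig ∅ p p₁)
    (hpnf : ∀ a ∈ p.body, ∀ t ∈ a.args, t.noNull)
    {g : Term → Term} (hgcf : constFix g) (hg : ∀ a ∈ p₁.body, a.subst g ∈ I) :
    ∃ gg, constFix gg ∧ (∀ a ∈ p.body, a.subst gg ∈ I) ∧
      p.head.subst gg = p₁.head.subst g := by
  classical
  obtain ⟨σ, hσmem, ρ, hinj, hfr, S, happ, γ, hmgu, hid, _, heq⟩ := hstep
  obtain ⟨hSne, hSsub, hSuni, hcond⟩ := happ
  have hγcf : constFix γ := hmgu.1.1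
  have hbody₁ : p₁.body = ((p.body \ S) ∪ (σ.rename ρ).body).image (Atom.subst γ) := by
    rw [heq]; rfl
  have hhead₁ : p₁.head = p.head.subst γ := by rw [heq]; rfl
  -- homomorphism of σ.body into I
  set hσb : Term → Term := fun t => g (γ (renT ρ t)) with hσbdef
  have hσbhom : IsHom hσb ↑σ.body I := by
    constructor
    · intro c
      show g (γ (renT ρ (Term.const c))) = _
      rw [renT_const, hγcf c, hgcf c]
    · intro b hb
      have h1 : (b.subst (renT ρ)).subst γ ∈ p₁.body := by
        rw [hbody₁]
        exact Finset.mem_image_of_mem _ (Finset.mem_union_right _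
          (Finset.mem_image_of_mem _ hb))
      have h2 := hg _ h1
      rwa [Atom.subst_subst, Atom.subst_subst] at h2
  obtain ⟨h', h'cf, h'fr, h'head⟩ := hsat σ hσmem hσb hσbhom
  -- the existential variable
  set z₀ : ℕ := if hz : σ.exVars.Nonempty then hz.choose else 0 with hz₀def
  have hz₀mem : ∀ z ∈ σ.exVars, z = z₀ := by
    intro z hz
    have hne : σ.exVars.Nonempty := ⟨z, hz⟩
    rw [hz₀def, dif_pos hne]
    exact Finset.card_le_one.mp (hnf σ hσmem).1 z hz _ hne.choose_spec
  set Z : Set ℕ :=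
    {v | ∃ a ∈ S, ∃ i, (σ.rename ρ).exPos i ∧ a.args[i]? = some (Term.var v)} with hZdef
  set gg : Term → Term := fun t => match t with
    | Term.var v => if v ∈ Z then h' (Term.var z₀) else g (γ (Term.var v))
    | Term.const c => Term.const c
    | Term.null m => g (γ (Term.null m)) with hggdef
  have hggcf : constFix gg := fun c => rfl
  have hgg_nz : ∀ t, (∀ v, t = Term.var v → v ∉ Z) → gg t = g (γ t) := by
    intro t ht
    cases t with
    | var v => exact if_neg (ht v rfl)
    | const c => show Term.const c = g (γ (Term.const c)); rw [hγcf, hgcf]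
    | null m => rfl
  -- members of Z are not shared
  have hZns : ∀ v ∈ Z, ¬ p.shared v := by
    rintro v ⟨a, ha, i, hexp, hargs⟩
    exact ((hcond a ha i hexp).2 v hargs)
  -- occurrences of Z-variables are unique: they occur only at ex positions of S-atoms
  have hZocc : ∀ v ∈ Z, ∀ b ∈ p.body, ∀ j, b.args[j]? = some (Term.var v) →
      b ∈ S ∧ (σ.rename ρ).exPos j := by
    rintro v hvZ b hb j hbj
    obtain ⟨a, ha, i, hexp, hargs⟩ := hvZ
    by_cases hba : b = a
    · by_cases hij : j = i
      · exact ⟨hba ▸ ha, hij ▸ hexp⟩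
      · exact absurd (shared_of_two_pos hb hbj
          (show b.args[i]? = some (Term.var v) by rw [hba]; exact hargs) hij)
          (hZns v ⟨a, ha, i, hexp, hargs⟩)
    · exact absurd (shared_of_two_atoms (hSsub ha) hb (Ne.symm hba)
        (mem_of_getElem? hargs) (mem_of_getElem? hbj))
        (hZns v ⟨a, ha, i, hexp, hargs⟩)
  have hZhead : ∀ v ∈ Z, Term.var v ∉ p.head.args := by
    rintro v hvZ hmem
    obtain ⟨a, ha, i, hexp, hargs⟩ := hvZ
    exact absurd (shared_of_head_body hmem (hSsub ha) (mem_of_getElem? hargs))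
      (hZns v ⟨a, ha, i, hexp, hargs⟩)
  refine ⟨gg, hggcf, ?_, ?_⟩
  · -- body
    intro b hb
    by_cases hbS : b ∈ S
    · -- S-atoms map to σ.head.subst h'
      have huni : b.subst γ = ((σ.rename ρ).head).subst γ :=
        hmgu.1.2 b (Finset.mem_union_left _ hbS) _
          (Finset.mem_union_right _ (Finset.mem_singleton_self _))
      have hlen : b.args.length = σ.head.args.length := by
        have := congrArg (fun x : Atom => x.args.length) huni
        simpa [Atom.subst, TGD.rename_head] using this
      have hgoal : b.subst gg = σ.head.subst h' := by
        refine atom_eq_iff.mpr ⟨?_, ?_⟩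
        · have := congrArg Atom.pred huni
          simpa [Atom.subst, TGD.rename_head] using this
        · show b.args.map gg = σ.head.args.map h'
          apply List.ext_getElem (by simpa using hlen)
          intro i hi1 hi2
          simp only [List.getElem_map]
          have hlt1 : i < b.args.length := by simpa using hi1
          have hlt2 : i < σ.head.args.length := by simpa using hi2
          have hbi : b.args[i]? = some (b.args[i]'hlt1) := List.getElem?_eq_getElem hlt1
          have hsi : σ.head.args[i]? = some (σ.head.args[i]'hlt2) := List.getElem?_eq_getElem hlt2
          set u : Term := b.args[i]'hlt1 with hudef
          set s : Term := σ.head.args[i]'hlt2 with hsdef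
          -- γ u = γ (renT ρ s)
          have hγeq : γ u = γ (renT ρ s) := by
            have := congrArg Atom.args huni
            simp only [Atom.subst, TGD.rename_head, List.map_map] at this
            have h3 := congrArg (fun l : List Term => l[i]?) this
            simp only [List.getElem?_map, hbi, hsi, Option.map_some] at h3
            exact eq_of_some_eq h3
          have hsmem : s ∈ σ.head.args := mem_of_getElem? hsi
          cases hs : s with
          | null m => exact absurd (hs ▸ (hheadnn σ hσmem s hsmem)) (by simp [Term.noNull])
          | const c =>
            -- i not an ex position
            have hnox : ¬ (σ.rename ρ).exPos i := by
              rintro hexp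
              rw [TGD.exPos_rename hinj] at hexp
              obtain ⟨z, _, hzi⟩ := hexp
              rw [hsi] at hzi
              have : s = Term.var z := by injection hzi
              rw [hs] at this; exact absurd this (by simp)
            have huZ : ∀ v, u = Term.var v → v ∉ Z := by
              intro v hv hvZ
              exact hnox (hZocc v hvZ b hb i (by rw [← hv]; exact hbi)).2
            have hγeq' : γ u = Term.const c := by
              rw [hs, renT_const, hγcf] at hγeq; exact hγeq
            rw [hgg_nz u huZ, hγeq', hgcf, h'cf]
          | var f =>
            by_cases hf : f ∈ σ.exVars
            · -- existential position
              have hexp : (σ.rename ρ).exPos i := by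
                rw [TGD.exPos_rename hinj]
                exact ⟨f, hf, hs ▸ hsi⟩
              -- u is a variable in Z
              have hu_nn : u.noNull := hpnf b hb u (mem_of_getElem? hbi)
              have hu_nc : ∀ c, u ≠ Term.const c := by
                intro c hc
                exact (hcond b hbS i hexp).1 c (by rw [← hc]; exact hbi)
              rcases noNull_cases hu_nn with ⟨c, hc⟩ | ⟨v, hv⟩
              · exact absurd hc (hu_nc c)
              · have hvZ : v ∈ Z := ⟨b, hbS, i, hexp, by rw [← hv]; exact hbi⟩
                rw [hv, hz₀mem f hf]
                exact if_pos hvZ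
            · -- frontier position
              have hffr : f ∈ σ.frontier := by
                have hfh : f ∈ σ.head.vars := Atom.mem_vars.mpr (hs ▸ hsmem)
                have hfb : f ∈ varsOfSet σ.body := by
                  by_contra hnb
                  exact hf (Finset.mem_sdiff.mpr ⟨hfh, hnb⟩)
                exact Finset.mem_inter.mpr ⟨hfb, hfh⟩
              have hnox : ¬ (σ.rename ρ).exPos i := by
                rintro hexp
                rw [TGD.exPos_rename hinj] at hexp
                obtain ⟨z, hz, hzi⟩ := hexp
                rw [hsi] at hzi
                have : s = Term.var z := by injection hzi
                rw [hs] at this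
                have : f = z := by injection this
                exact hf (this ▸ hz)
              have huZ : ∀ v, u = Term.var v → v ∉ Z := by
                intro v hv hvZ
                exact hnox (hZocc v hvZ b hb i (by rw [← hv]; exact hbi)).2
              have hγeq' : γ u = γ (Term.var (ρ f)) := by
                rw [hs, renT_var'] at hγeq; exact hγeq
              have hrhs : h' (Term.var f) = g (γ (Term.var (ρ f))) := h'fr f hffr
              rw [hgg_nz u huZ, hγeq', hrhs]
      rw [hgoal]
      exact h'head
    · -- atoms outside S
      have : b.subst gg = (b.subst γ).subst g := by
        rw [Atom.subst_subst]
        apply Atom.subst_congr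
        intro t ht
        apply hgg_nz
        rintro v rfl hvZ
        exact hbS (hZocc v hvZ b hb _ (List.mem_iff_getElem?.mp ht).choose_spec).1
      rw [this]
      apply hg
      rw [hbody₁]
      exact Finset.mem_image_of_mem _ (Finset.mem_union_left _
        (Finset.mem_sdiff.mpr ⟨hb, hbS⟩))
  · -- head
    rw [hhead₁, Atom.subst_subst]
    apply Atom.subst_congr
    intro t ht
    apply hgg_nz
    rintro v rfl hvZ
    exact (hZhead v hvZ) ht

/-- soundness of a factorization step -/
theorem fact_step_sound {Sig : Finset TGD} {I : Set Atom}
    {p p₁ : CQ} (hstep : IsFactStep Sig ∅ p p₁)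
    {g : Term → Term} (hgcf : constFix g) (hg : ∀ a ∈ p₁.body, a.subst g ∈ I) :
    ∃ gg, constFix gg ∧ (∀ a ∈ p.body, a.subst gg ∈ I) ∧
      p.head.subst gg = p₁.head.subst g := by
  obtain ⟨σ, hσmem, S, hfact, γ, hmgu, hid, _, heq⟩ := hstep
  refine ⟨fun t => g (γ t), constFix.comp hgcf hmgu.1.1, ?_, ?_⟩
  · intro a ha
    rw [← Atom.subst_subst]
    apply hg
    rw [heq]
    exact Finset.mem_image_of_mem _ ha
  · rw [heq, CQ.subst_head, Atom.subst_subst]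

/-- soundness along reachability -/
theorem reach_sound {Sig : Finset TGD} {q₀ : CQ} {I : Set Atom} (hsat : satSet Sig I)
    (hnf : ∀ σ ∈ Sig, σ.NormalForm)
    (hheadnn : ∀ σ ∈ Sig, ∀ t ∈ σ.head.args, t.noNull)
    (hfin : ∃ Q : Finset CQ, ∀ p, Reach Sig ∅ q₀ p → ∃ p' ∈ Q, CQEquiv p p')
    (h₀ : (∀ t ∈ q₀.head.args, t.noNull) ∧ ∀ a ∈ q₀.body, ∀ t ∈ a.args, t.noNull) :
    ∀ p, Reach Sig ∅ q₀ p → ∀ g : Term → Term, constFix g →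
      (∀ a ∈ p.body, a.subst g ∈ I) →
      ∃ g', constFix g' ∧ (∀ a ∈ q₀.body, a.subst g' ∈ I) ∧
        q₀.head.subst g' = p.head.subst g := by
  intro p hre
  induction hre with
  | refl => exact fun g hgcf hg => ⟨g, hgcf, hg, rfl⟩
  | @rw p p₁ hpre hstep ih =>
    intro g hgcf hg
    have hpnf := (reach_nullFree hfin h₀ p hpre).2
    obtain ⟨gg, hggcf, hgg, hh⟩ := rw_step_sound hsat hnf hheadnn hstep hpnf hgcf hg
    obtain ⟨g', hg'cf, hg', hh'⟩ := ih gg hggcf hgg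
    exact ⟨g', hg'cf, hg', hh'.trans hh⟩
  | @fact p p₁ hpre hstep ih =>
    intro g hgcf hg
    obtain ⟨gg, hggcf, hgg, hh⟩ := fact_step_sound hstep hgcf hg
    obtain ⟨g', hg'cf, hg', hh'⟩ := ih gg hggcf hgg
    exact ⟨g', hg'cf, hg', hh'.trans hh⟩

/-- soundness of the rewriting output -/
theorem xrewrite_sound {Sig : Finset TGD} {q₀ : CQ} {I : Set Atom} (hsat : satSet Sig I)
    (hnf : ∀ σ ∈ Sig, σ.NormalForm)
    (hheadnn : ∀ σ ∈ Sig, ∀ t ∈ σ.head.args, t.noNull)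
    (hfin : ∃ Q : Finset CQ, ∀ p, Reach Sig ∅ q₀ p → ∃ p' ∈ Q, CQEquiv p p')
    (h₀ : (∀ t ∈ q₀.head.args, t.noNull) ∧ ∀ a ∈ q₀.body, ∀ t ∈ a.args, t.noNull)
    {p' : CQ} (hp' : p' ∈ XRewriteOut Sig ∅ q₀) {g : Term → Term} (hgcf : constFix g)
    (hg : ∀ a ∈ p'.body, a.subst g ∈ I) :
    ∃ g', constFix g' ∧ (∀ a ∈ q₀.body, a.subst g' ∈ I) ∧
      q₀.head.subst g' = p'.head.subst g := by
  rcases hp' with hp' | ⟨p, hre, hstep⟩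
  · obtain rfl := Set.mem_singleton_iff.mp hp'
    exact ⟨g, hgcf, hg, rfl⟩
  · have hpnf := (reach_nullFree hfin h₀ p hre).2
    obtain ⟨gg, hggcf, hgg, hh⟩ := rw_step_sound hsat hnf hheadnn hstep hpnf hgcf hg
    obtain ⟨g', hg'cf, hg', hh'⟩ := reach_sound hsat hnf hheadnn hfin h₀ p hre gg hggcf hgg
    exact ⟨g', hg'cf, hg', hh'.trans hh⟩

/-! ### Part 5: the chase -/

def termToN : Term → ℕ
  | Term.const c => 3 * c
  | Term.null n => 3 * n + 1
  | Term.var v => 3 * v + 2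

theorem termToN_inj : Function.Injective termToN := by
  intro t t' h
  cases t <;> cases t' <;> simp only [termToN] at h <;> first | (congr 1; omega) | omega

def atomToN (a : Atom) : ℕ := Nat.pair a.pred (Encodable.encode (a.args.map termToN))

theorem atomToN_inj : Function.Injective atomToN := by
  intro a a' h
  unfold atomToN at h
  have h1 := congrArg Nat.unpair h
  simp only [Nat.unpair_pair, Prod.mk.injEq] at h1
  refine atom_eq_iff.mpr ⟨h1.1, ?_⟩
  have h2 := Encodable.encode_injective h1.2
  exact List.map_injective_iff.mpr termToN_inj h2

def tgdToN (σ : TGD) : ℕ :=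
  Nat.pair (Encodable.encode (σ.body.image atomToN)) (atomToN σ.head)

theorem tgdToN_inj : Function.Injective tgdToN := by
  intro σ σ' h
  unfold tgdToN at h
  have h1 := congrArg Nat.unpair h
  simp only [Nat.unpair_pair, Prod.mk.injEq] at h1
  have hb := Finset.image_injective atomToN_inj (Encodable.encode_injective h1.1)
  have hh := atomToN_inj h1.2
  cases σ; cases σ'; simp_all

theorem list_map_eq_pointwise {α β : Type*} {l : List α} {f g : α → β}
    (h : l.map f = l.map g) : ∀ a ∈ l, f a = g a := by
  induction l with
  | nil => simp
  | cons a l ih =>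
    simp only [List.map_cons, List.cons.injEq] at h
    intro x hx
    rcases List.mem_cons.mp hx with rfl | hx
    · exact h.1
    · exact ih h.2 x hx

def hgraph (σ : TGD) (h : Term → Term) : List ℕ :=
  ((varsOfSet σ.body).sort (· ≤ ·)).map (fun v => termToN (h (Term.var v)))

theorem hgraph_congr {σ : TGD} {h h' : Term → Term}
    (he : ∀ v ∈ varsOfSet σ.body, h (Term.var v) = h' (Term.var v)) :
    hgraph σ h = hgraph σ h' := by
  unfold hgraph
  apply List.map_congr_left
  intro v hv
  rw [he v ((Finset.mem_sort _).mp hv)]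

def ncode (σ : TGD) (h : Term → Term) (n : ℕ) : ℕ :=
  Nat.pair (tgdToN σ) (Nat.pair (Encodable.encode (hgraph σ h)) n)

theorem ncode_inj {σ σ' : TGD} {h h' : Term → Term} {n n' : ℕ}
    (he : ncode σ h n = ncode σ' h' n') :
    σ = σ' ∧ n = n' ∧ ∀ v ∈ varsOfSet σ.body, h (Term.var v) = h' (Term.var v) := by
  unfold ncode at he
  have h1 := congrArg Nat.unpair he
  simp only [Nat.unpair_pair, Prod.mk.injEq] at h1
  have hσ := tgdToN_inj h1.1
  have h2 := congrArg Nat.unpair h1.2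
  simp only [Nat.unpair_pair, Prod.mk.injEq] at h2
  have hgr := Encodable.encode_injective h2.1
  refine ⟨hσ, h2.2, ?_⟩
  intro v hv
  subst hσ
  unfold hgraph at hgr
  have := list_map_eq_pointwise hgr v ((Finset.mem_sort _).mpr hv)
  exact termToN_inj this

/-- extension of a homomorphism mapping the existential variable to a fresh null -/
def extH (σ : TGD) (h : Term → Term) (n : ℕ) : Term → Term := fun t =>
  match t with
  | Term.var z => if z ∈ σ.exVars then Term.null (ncode σ h n) else h (Term.var z)
  | Term.const c => h (Term.const c)
  | Term.null m => h (Term.null m)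

theorem extH_constFix {σ : TGD} {h : Term → Term} (hcf : constFix h) (n : ℕ) :
    constFix (extH σ h n) := fun c => hcf c

theorem extH_frontier {σ : TGD} (h : Term → Term) (n : ℕ) {v : ℕ} (hv : v ∈ σ.frontier) :
    extH σ h n (Term.var v) = h (Term.var v) := by
  have : v ∉ σ.exVars := by
    rw [TGD.exVars, Finset.mem_sdiff]
    push_neg
    intro _
    exact (Finset.mem_inter.mp hv).1
  simp only [extH, if_neg this]

theorem extH_notex {σ : TGD} (h : Term → Term) (n : ℕ) {v : ℕ} (hv : v ∉ σ.exVars) :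
    extH σ h n (Term.var v) = h (Term.var v) := by
  simp only [extH, if_neg hv]

theorem extH_body {σ : TGD} (h : Term → Term) (n : ℕ) {b : Atom} (hb : b ∈ σ.body) :
    b.subst (extH σ h n) = b.subst h := by
  apply Atom.subst_congr
  intro t ht
  cases t with
  | var z =>
    have hz : z ∈ varsOfSet σ.body := mem_varsOfSet.mpr ⟨b, hb, Atom.mem_vars.mpr ht⟩
    have : z ∉ σ.exVars := by
      rw [TGD.exVars, Finset.mem_sdiff]; push_neg; intro _; exact hz
    simp only [extH, if_neg this]
  | const c => rfl
  | null m => rfl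

section Chase

variable (Sig : Finset TGD) (D : Finset Atom)

def chStep (X : Set Atom) (n : ℕ) : Set Atom :=
  { A | ∃ σ ∈ Sig, ∃ h, constFix h ∧ (∀ b ∈ σ.body, b.subst h ∈ X) ∧
      A = σ.head.subst (extH σ h n) }

def Ch : ℕ → Set Atom
  | 0 => ↑D
  | n + 1 => Ch n ∪ chStep Sig (Ch n) n

def chase : Set Atom := ⋃ n, Ch Sig D n

theorem Ch_mono : ∀ {m m' : ℕ}, m ≤ m' → Ch Sig D m ⊆ Ch Sig D m' := by
  intro m m' h
  induction m' with
  | zero => rw [Nat.le_zero.mp h]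
  | succ k ih =>
    rcases Nat.lt_or_ge m (k+1) with hl | hg
    · exact fun a ha => Or.inl (ih (by omega) ha)
    · have : m = k + 1 := by omega
      rw [this]

theorem Ch_subset_chase (m : ℕ) : Ch Sig D m ⊆ chase Sig D := by
  intro a ha; exact Set.mem_iUnion.mpr ⟨m, ha⟩

/-- the minimal chase level of an atom -/
def lvl (a : Atom) : ℕ := sInf {m | a ∈ Ch Sig D m}

theorem mem_Ch_lvl {a : Atom} (ha : a ∈ chase Sig D) : a ∈ Ch Sig D (lvl Sig D a) := by
  obtain ⟨m, hm⟩ := Set.mem_iUnion.mp ha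
  exact Nat.sInf_mem ⟨m, show m ∈ {m | a ∈ Ch Sig D m} from hm⟩

theorem lvl_le {a : Atom} {m : ℕ} (ha : a ∈ Ch Sig D m) : lvl Sig D a ≤ m :=
  Nat.sInf_le ha

theorem not_mem_of_lt_lvl {a : Atom} {m : ℕ} (hm : m < lvl Sig D a) :
    a ∉ Ch Sig D m := fun ha => absurd (lvl_le Sig D ha) (by omega)

theorem D_subset_chase : ↑D ⊆ chase Sig D :=
  Ch_subset_chase Sig D 0

theorem chase_sat : satSet Sig (chase Sig D) := by
  intro σ hσ h hhom
  set n : ℕ := σ.body.sup (fun b => lvl Sig D (b.subst h)) with hn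
  have hbody : ∀ b ∈ σ.body, b.subst h ∈ Ch Sig D n := by
    intro b hb
    have h1 : b.subst h ∈ chase Sig D := hhom.2 b hb
    exact Ch_mono Sig D (Finset.le_sup (f := fun b => lvl Sig D (b.subst h)) hb)
      (mem_Ch_lvl Sig D h1)
  refine ⟨extH σ h n, extH_constFix hhom.1 n, fun v hv => extH_frontier h n hv, ?_⟩
  apply Ch_subset_chase Sig D (n + 1)
  exact Or.inr ⟨σ, hσ, h, hhom.1, hbody, rfl⟩

variable {R : Schema}

/-- the shape of terms in the chase -/
theorem ch_args (hD : IsDatabase R D) (hover : ∀ σ ∈ Sig, σ.overSchema R) :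
    ∀ m, ∀ a ∈ Ch Sig D m, ∀ t ∈ a.args,
      (∃ c, t = Term.const c) ∨
      ∃ σ₂ h₂ n₂, σ₂ ∈ Sig ∧ constFix h₂ ∧ (∀ b ∈ σ₂.body, b.subst h₂ ∈ Ch Sig D n₂) ∧
        n₂ + 1 ≤ m ∧ t = Term.null (ncode σ₂ h₂ n₂) := by
  intro m
  induction m with
  | zero =>
    intro a ha t ht
    exact Or.inl ((hD a ha).2 t ht)
  | succ k ih =>
    rintro a (ha | ⟨σ₂, hσ₂, h₂, hcf₂, hbd₂, rfl⟩) t ht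
    · rcases ih a ha t ht with hc | ⟨σ₂, h₂, n₂, h1, h2, h3, h4, h5⟩
      · exact Or.inl hc
      · exact Or.inr ⟨σ₂, h₂, n₂, h1, h2, h3, by omega, h5⟩
    · obtain ⟨s, hs, rfl⟩ := List.mem_map.mp ht
      cases s with
      | const c => exact Or.inl ⟨c, hcf₂ c⟩
      | null mm =>
        exact absurd ((hover σ₂ hσ₂).2.2.2 _ hs) (by simp [Term.noNull])
      | var z =>
        by_cases hz : z ∈ σ₂.exVars
        · refine Or.inr ⟨σ₂, h₂, k, hσ₂, hcf₂, hbd₂, le_refl _, ?_⟩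
          simp only [extH, if_pos hz]
        · have hzb : z ∈ varsOfSet σ₂.body := by
            have hzh : z ∈ σ₂.head.vars := Atom.mem_vars.mpr hs
            by_contra hnb
            exact hz (Finset.mem_sdiff.mpr ⟨hzh, hnb⟩)
          obtain ⟨b, hb, hzb'⟩ := mem_varsOfSet.mp hzb
          have hmem : h₂ (Term.var z) ∈ (b.subst h₂).args :=
            List.mem_map_of_mem (f := h₂) (Atom.mem_vars.mp hzb')
          rw [extH_notex h₂ k hz]
          rcases ih _ (hbd₂ b hb) _ hmem with hc | ⟨σ₃, h₃, n₃, h1, h2, h3, h4, h5⟩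
          · exact Or.inl hc
          · exact Or.inr ⟨σ₃, h₃, n₃, h1, h2, h3, by omega, h5⟩

/-- head images agree when the homomorphisms agree on body variables -/
theorem extH_head_congr {σ : TGD} {h h₂ : Term → Term} {n : ℕ}
    (hcf : constFix h) (hcf₂ : constFix h₂)
    (hnn : ∀ t ∈ σ.head.args, t.noNull)
    (he : ∀ v ∈ varsOfSet σ.body, h₂ (Term.var v) = h (Term.var v)) :
    σ.head.subst (extH σ h₂ n) = σ.head.subst (extH σ h n) := by
  apply Atom.subst_congr
  intro t ht
  cases t with
  | const c => rw [extH_constFix hcf₂ n, extH_constFix hcf n]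
  | null m => exact absurd (hnn _ ht) (by simp [Term.noNull])
  | var z =>
    by_cases hz : z ∈ σ.exVars
    · simp only [extH, if_pos hz, ncode]
      rw [hgraph_congr he]
    · rw [extH_notex h₂ n hz, extH_notex h n hz]
      apply he
      have hzh : z ∈ σ.head.vars := Atom.mem_vars.mpr ht
      by_contra hnb
      exact hz (Finset.mem_sdiff.mpr ⟨hzh, hnb⟩)

/-- freshness: below level n+1, the null of an application at stage n occurs only
in the generated atom -/
theorem chF (hD : IsDatabase R D) (hover : ∀ σ ∈ Sig, σ.overSchema R)
    {σ : TGD} (hσ : σ ∈ Sig) {h : Term → Term} {n : ℕ} (hcf : constFix h)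
    (hfresh : σ.head.subst (extH σ h n) ∉ Ch Sig D n) :
    ∀ m, m ≤ n + 1 → ∀ a ∈ Ch Sig D m, Term.null (ncode σ h n) ∈ a.args →
      a = σ.head.subst (extH σ h n) := by
  intro m
  induction m with
  | zero =>
    intro _ a ha hmem
    obtain ⟨c, hc⟩ := (hD a ha).2 _ hmem
    exact absurd hc (fun h => Term.noConfusion h)
  | succ k ih =>
    rintro hk a (ha | ⟨σ₂, hσ₂, h₂, hcf₂, hbd₂, rfl⟩) hmem
    · exact ih (by omega) a ha hmem
    · obtain ⟨s, hs, he⟩ := List.mem_map.mp hmem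
      cases s with
      | const c => exact absurd ((hcf₂ c).symm.trans he) (fun h => Term.noConfusion h)
      | null mm =>
        exact absurd ((hover σ₂ hσ₂).2.2.2 _ hs) (by simp [Term.noNull])
      | var z =>
        by_cases hz : z ∈ σ₂.exVars
        · -- same code: the atoms coincide
          simp only [extH, if_pos hz] at he
          have hcodes : ncode σ₂ h₂ k = ncode σ h n := by injection he
          obtain ⟨rfl, rfl, hagree⟩ := ncode_inj hcodes
          exact extH_head_congr hcf hcf₂ (fun t ht => (hover σ₂ hσ₂).2.2.2 t ht) hagree
        · -- the null comes from the body: contradiction with freshness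
          rw [extH_notex h₂ k hz] at he
          have hzb : z ∈ varsOfSet σ₂.body := by
            have hzh : z ∈ σ₂.head.vars := Atom.mem_vars.mpr hs
            by_contra hnb
            exact hz (Finset.mem_sdiff.mpr ⟨hzh, hnb⟩)
          obtain ⟨b, hb, hzb'⟩ := mem_varsOfSet.mp hzb
          have hmem2 : Term.null (ncode σ h n) ∈ (b.subst h₂).args := by
            rw [← he]
            exact List.mem_map_of_mem (f := h₂) (Atom.mem_vars.mp hzb')
          have heq := ih (by omega) _ (hbd₂ b hb) hmem2
          have : σ.head.subst (extH σ h n) ∈ Ch Sig D k := heq ▸ hbd₂ b hb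
          exact absurd (Ch_mono Sig D (by omega) this) hfresh

/-- nulls occur only at affected positions -/
theorem chAff (hD : IsDatabase R D) (hover : ∀ σ ∈ Sig, σ.overSchema R) :
    ∀ m, ∀ a ∈ Ch Sig D m, ∀ j ν, a.args[j]? = some (Term.null ν) →
      ∀ (σ' : TGD) (h' : Term → Term) (n' : ℕ), ν = ncode σ' h' n' →
        AffectedPos Sig σ' (a.pred, j) := by
  intro m
  induction m with
  | zero =>
    intro a ha j ν hj σ' h' n' _
    obtain ⟨c, hc⟩ := (hD a ha).2 _ (mem_of_getElem? hj)
    exact absurd hc (fun h => Term.noConfusion h)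
  | succ k ih =>
    rintro a (ha | ⟨σ₂, hσ₂, h₂, hcf₂, hbd₂, rfl⟩) j ν hj σ' h' n' hν
    · exact ih a ha j ν hj σ' h' n' hν
    · rw [Atom.subst_getElem?] at hj
      obtain ⟨s, hs, he⟩ := Option.map_eq_some_iff.mp hj
      have hsmem : s ∈ σ₂.head.args := mem_of_getElem? hs
      cases s with
      | const c => exact absurd ((hcf₂ c).symm.trans he) (fun h => Term.noConfusion h)
      | null mm =>
        exact absurd ((hover σ₂ hσ₂).2.2.2 _ hsmem) (by simp [Term.noNull])
      | var z =>
        by_cases hz : z ∈ σ₂.exVars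
        · simp only [extH, if_pos hz] at he
          have hcodes : ncode σ₂ h₂ k = ν := by injection he
          rw [hν] at hcodes
          obtain ⟨rfl, -, -⟩ := ncode_inj hcodes
          exact AffectedPos.base ⟨z, hz, hs⟩
        · rw [extH_notex h₂ k hz] at he
          have hzb : z ∈ varsOfSet σ₂.body := by
            have hzh : z ∈ σ₂.head.vars := Atom.mem_vars.mpr hsmem
            by_contra hnb
            exact hz (Finset.mem_sdiff.mpr ⟨hzh, hnb⟩)
          refine AffectedPos.step hσ₂ hs hzb ?_
          intro b hb j' hbj'
          apply ih _ (hbd₂ b hb) j' ν _ σ' h' n' hν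
          rw [Atom.subst_getElem?, hbj']
          simp [he]

end Chase

/-! ### Part 6: completeness of XRewrite against the chase -/

theorem renT_noNull (ρ : ℕ → ℕ) {t : Term} (h : t.noNull) : (renT ρ t).noNull := by
  cases t with
  | var v => trivial
  | const c => trivial
  | null n => exact absurd h (by simp [Term.noNull])

theorem count_two_exists {α : Type*} [DecidableEq α] :
    ∀ (l : List α) (x : α), 2 ≤ l.count x →
      ∃ i j : ℕ, i ≠ j ∧ l[i]? = some x ∧ l[j]? = some x := by
  intro l
  induction l with
  | nil => intro x h; simp at h
  | cons a l ih =>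
    intro x h
    by_cases hax : a = x
    · subst hax
      have h1 : 1 ≤ l.count a := by
        simp only [List.count_cons, beq_self_eq_true, if_true] at h; omega
      obtain ⟨i, hi⟩ := List.mem_iff_getElem?.mp (List.one_le_count_iff.mp h1)
      exact ⟨0, i + 1, by omega, by simp, by simpa using hi⟩
    · have h2 : 2 ≤ l.count x := by
        have : (a :: l).count x = l.count x := by
          simp only [List.count_cons]
          simp [hax]
        omega
      obtain ⟨i, j, hij, hi, hj⟩ := ih x h2
      exact ⟨i + 1, j + 1, by omega, by simpa using hi, by simpa using hj⟩

/-- the maximal chase level of the image of a query -/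
def Lof (Sig : Finset TGD) (D : Finset Atom) (q : CQ) (μ : Term → Term) : ℕ :=
  q.body.sup (fun a => lvl Sig D (a.subst μ))

theorem le_Lof {Sig : Finset TGD} {D : Finset Atom} {q : CQ} {μ : Term → Term}
    {a : Atom} (ha : a ∈ q.body) : lvl Sig D (a.subst μ) ≤ Lof Sig D q μ :=
  Finset.le_sup (f := fun a => lvl Sig D (a.subst μ)) ha

def cntL (Sig : Finset TGD) (D : Finset Atom) (q : CQ) (μ : Term → Term) (L : ℕ) : ℕ :=
  (q.body.filter (fun a => lvl Sig D (a.subst μ) = L)).card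

theorem comp_main {R : Schema} {Sig : Finset TGD} {D : Finset Atom}
    (hD : IsDatabase R D) (hover : ∀ σ ∈ Sig, σ.overSchema R)
    (hnf : ∀ σ ∈ Sig, σ.NormalForm) (q₀ : CQ) :
    ∀ L : ℕ, ∀ c : ℕ, ∀ k : ℕ, ∀ (q' : CQ) (μ : Term → Term),
    Reach Sig ∅ q₀ q' → constFix μ →
    (∀ a ∈ q'.body, a.subst μ ∈ chase Sig D) →
    (∀ a ∈ q'.body, ∀ t ∈ a.args, t.noNull) →
    (∀ t ∈ q'.head.args, t.noNull) →
    (∀ t ∈ q'.head.args, ∃ cc, μ t = Term.const cc) →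
    (q' ∈ XRewriteOut Sig ∅ q₀ ∨ 1 ≤ Lof Sig D q' μ) →
    Lof Sig D q' μ = L → cntL Sig D q' μ L = c → q'.body.card = k →
    ∃ p' ∈ XRewriteOut Sig ∅ q₀, ∃ ν : Term → Term, constFix ν ∧
      (∀ a ∈ p'.body, a.subst ν ∈ (↑D : Set Atom)) ∧
      (∀ t ∈ p'.head.args, t.noNull) ∧ (∀ a ∈ p'.body, ∀ t ∈ a.args, t.noNull) ∧
      p'.head.subst ν = q'.head.subst μ := by
  intro L
  induction L using Nat.strong_induction_on with
  | _ L IHL =>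
  intro c
  induction c using Nat.strong_induction_on with
  | _ c IHc =>
  intro k
  induction k using Nat.strong_induction_on with
  | _ k IHk =>
  intro q' μ hre hμcf hμch hbnf hhnf hhc hdisj hL hc hk
  by_cases hL0 : Lof Sig D q' μ = 0
  · -- base case: all atoms are mapped into D
    have hq'mem : q' ∈ XRewriteOut Sig ∅ q₀ := by
      rcases hdisj with h | h
      · exact h
      · omega
    refine ⟨q', hq'mem, μ, hμcf, ?_, hhnf, hbnf, rfl⟩
    intro a ha
    have h1 : lvl Sig D (a.subst μ) = 0 := by
      have h2 : lvl Sig D (a.subst μ) ≤ Lof Sig D q' μ := le_Lof ha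
      omega
    have h2 := mem_Ch_lvl Sig D (hμch a ha)
    rw [h1] at h2
    exact h2
  · -- recursive case
    have hbne : q'.body.Nonempty := by
      rw [Finset.nonempty_iff_ne_empty]
      intro hemp
      apply hL0
      unfold Lof
      rw [hemp, Finset.sup_empty]
      rfl
    obtain ⟨a₀, ha₀, hsup⟩ :=
      Finset.exists_mem_eq_sup q'.body hbne (fun a => lvl Sig D (a.subst μ))
    set LL := Lof Sig D q' μ with hLLdef
    have hLL1 : 1 ≤ LL := by omega
    set astar := a₀.subst μ with hastardef
    have hastar_lvl : lvl Sig D astar = LL := hsup.symm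
    have hastar_ch : astar ∈ Ch Sig D LL := by
      rw [← hastar_lvl]; exact mem_Ch_lvl Sig D (hμch a₀ ha₀)
    set n := LL - 1 with hndef
    have hLLn : LL = n + 1 := by omega
    have hfresh : astar ∉ Ch Sig D n := not_mem_of_lt_lvl Sig D (by omega)
    have hstep_mem : astar ∈ Ch Sig D (n + 1) := by rw [← hLLn]; exact hastar_ch
    have hder : ∃ σ ∈ Sig, ∃ h, constFix h ∧ (∀ b ∈ σ.body, b.subst h ∈ Ch Sig D n) ∧
        astar = σ.head.subst (extH σ h n) := by
      rcases hstep_mem with hin | hnew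
      · exact absurd hin hfresh
      · exact hnew
    obtain ⟨σ, hσ, h, hcf, hbd, heqa⟩ := hder
    have hfresh' : σ.head.subst (extH σ h n) ∉ Ch Sig D n := by rw [← heqa]; exact hfresh
    -- the set S of atoms mapped onto astar
    set S := q'.body.filter (fun a => a.subst μ = astar) with hSdef
    have hSsub : S ⊆ q'.body := Finset.filter_subset _ _
    have hSim : ∀ a ∈ S, a.subst μ = astar := fun a ha => (Finset.mem_filter.mp ha).2
    have hSne : S.Nonempty := ⟨a₀, Finset.mem_filter.mpr ⟨ha₀, rfl⟩⟩
    -- the fresh null is exactly at the existential positions of astar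
    have hexarg : ∀ i, σ.exPos i → astar.args[i]? = some (Term.null (ncode σ h n)) := by
      rintro i ⟨z, hz, hzi⟩
      rw [heqa, Atom.subst_getElem?, hzi]
      simp only [Option.map_some]
      congr 1
      simp only [extH, if_pos hz]
    have hexback : ∀ j, astar.args[j]? = some (Term.null (ncode σ h n)) → σ.exPos j := by
      intro j hj
      rw [heqa, Atom.subst_getElem?] at hj
      obtain ⟨s, hs, he⟩ := Option.map_eq_some_iff.mp hj
      cases s with
      | const cc => exact absurd ((hcf cc).symm.trans he) (fun hx => Term.noConfusion hx)
      | null mm =>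
        exact absurd ((hover σ hσ).2.2.2 _ (mem_of_getElem? hs)) (by simp [Term.noNull])
      | var z =>
        by_cases hz : z ∈ σ.exVars
        · exact ⟨z, hz, hs⟩
        · rw [extH_notex h n hz] at he
          have hzb : z ∈ varsOfSet σ.body := by
            have hzh : z ∈ σ.head.vars := Atom.mem_vars.mpr (mem_of_getElem? hs)
            by_contra hnb
            exact hz (Finset.mem_sdiff.mpr ⟨hzh, hnb⟩)
          obtain ⟨b, hb, hzb'⟩ := mem_varsOfSet.mp hzb
          have hmem2 : Term.null (ncode σ h n) ∈ (b.subst h).args := by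
            rw [← he]
            exact List.mem_map_of_mem (f := h) (Atom.mem_vars.mp hzb')
          have heq2 := chF Sig D hD hover hσ hcf hfresh' n (by omega) _ (hbd b hb) hmem2
          have : σ.head.subst (extH σ h n) ∈ Ch Sig D n := heq2 ▸ hbd b hb
          exact absurd this hfresh'
    have hmemS : ∀ b ∈ q'.body, Term.null (ncode σ h n) ∈ (b.subst μ).args → b ∈ S := by
      intro b hb hmem
      have h1 : b.subst μ ∈ Ch Sig D (lvl Sig D (b.subst μ)) := mem_Ch_lvl Sig D (hμch b hb)
      have h2 : lvl Sig D (b.subst μ) ≤ n + 1 := by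
        have h2' : lvl Sig D (b.subst μ) ≤ Lof Sig D q' μ := le_Lof hb
        rw [← hLLdef] at h2'
        omega
      have h3 := chF Sig D hD hover hσ hcf hfresh' _ h2 _ h1 hmem
      rw [hSdef, Finset.mem_filter]
      exact ⟨hb, h3.trans heqa.symm⟩
    -- arguments of S-atoms at existential positions
    have hexargS : ∀ a ∈ S, ∀ i, σ.exPos i →
        ∃ u, a.args[i]? = some u ∧ μ u = Term.null (ncode σ h n) := by
      intro a ha i hi
      have h1 : (a.args[i]?).map μ = some (Term.null (ncode σ h n)) := by
        rw [← Atom.subst_getElem?, hSim a ha]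
        exact hexarg i hi
      obtain ⟨u, hu, he⟩ := Option.map_eq_some_iff.mp h1
      exact ⟨u, hu, he⟩
    by_cases hsh : ∃ a ∈ S, ∃ i, σ.exPos i ∧ ∃ v, a.args[i]? = some (Term.var v) ∧
        q'.shared v
    · -- FACTORIZATION step
      obtain ⟨a₁, ha₁S, i, hexpi, v, hargv, hshv⟩ := hsh
      have hμv : μ (Term.var v) = Term.null (ncode σ h n) := by
        obtain ⟨u, hu, he⟩ := hexargS a₁ ha₁S i hexpi
        rw [hargv] at hu
        rwa [← eq_of_some_eq hu] at he
      set S' := q'.body.filter (fun b => Term.var v ∈ b.args) with hS'def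
      have hS'sub : S' ⊆ q'.body := Finset.filter_subset _ _
      have hS'v : ∀ b ∈ S', Term.var v ∈ b.args := fun b hb => (Finset.mem_filter.mp hb).2
      have hS'S : ∀ b ∈ S', b ∈ S := by
        intro b hb
        apply hmemS b (hS'sub hb)
        rw [← hμv]
        exact List.mem_map_of_mem (f := μ) (hS'v b hb)
      have hS'pos : ∀ b ∈ S', ∀ j, b.args[j]? = some (Term.var v) → σ.exPos j := by
        intro b hb j hj
        apply hexback j
        rw [← hSim b (hS'S b hb), Atom.subst_getElem?, hj]
        simp only [Option.map_some]
        rw [hμv]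
      have hvnothead : Term.var v ∉ q'.head.args := by
        intro hmem
        obtain ⟨cc, hcc⟩ := hhc _ hmem
        rw [hμv] at hcc
        exact Term.noConfusion hcc
      -- every atom contains v at most once
      have hcount1 : ∀ b ∈ q'.body, b.countVar v ≤ 1 := by
        intro b hb
        by_contra hgt
        simp only [Atom.countVar] at hgt
        obtain ⟨i1, j1, hij, hi1, hj1⟩ := count_two_exists b.args (Term.var v) (by omega)
        have hbS' : b ∈ S' := Finset.mem_filter.mpr ⟨hb, mem_of_getElem? hi1⟩
        exact hij (exPos_unique (hnf σ hσ) (hS'pos b hbS' i1 hi1) (hS'pos b hbS' j1 hj1))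
      have h2card : 2 ≤ S'.card := by
        have hshv2 : 2 ≤ q'.countVar v := hshv
        unfold CQ.countVar at hshv2
        have hhead0 : q'.head.countVar v = 0 :=
          List.count_eq_zero.mpr hvnothead
        have hsplit := Finset.sum_filter_add_sum_filter_not q'.body
          (fun b => Term.var v ∈ b.args) (fun b => b.countVar v)
        rw [← hS'def] at hsplit
        have hzero : ∑ b ∈ q'.body.filter (fun b => ¬ Term.var v ∈ b.args),
            b.countVar v = 0 := by
          apply Finset.sum_eq_zero
          intro b hb
          exact List.count_eq_zero.mpr (Finset.mem_filter.mp hb).2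
        have hbound : ∑ b ∈ S', b.countVar v ≤ S'.card • 1 := by
          apply Finset.sum_le_card_nsmul
          intro b hb
          exact hcount1 b (hS'sub hb)
        simp only [smul_eq_mul, mul_one] at hbound
        omega
      have hS'uni : Unifies S' :=
        ⟨μ, isUnifier_of_const_image hμcf (fun b hb => hSim b (hS'S b hb))⟩
      have hfact : Factorizable q' σ S' := by
        refine ⟨hS'sub, h2card, hS'uni, ⟨i, hexpi⟩, v, ?_, ?_⟩
        · intro hvmem
          obtain ⟨b, hb, hvb⟩ := mem_varsOfSet.mp hvmem
          have hbS' : b ∈ S' := Finset.mem_filter.mpr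
            ⟨(Finset.mem_sdiff.mp hb).1, Atom.mem_vars.mp hvb⟩
          exact (Finset.mem_sdiff.mp hb).2 hbS'
        · intro b hb
          constructor
          · obtain ⟨j, hj⟩ := List.mem_iff_getElem?.mp (hS'v b hb)
            exact ⟨j, hS'pos b hb j hj, hj⟩
          · exact hS'pos b hb
      obtain ⟨γf, hmguf, hidoutf, habsf, hγfnn⟩ := exists_good_mgu hS'uni
      have hμuni : IsUnifier μ S' :=
        isUnifier_of_const_image hμcf (fun b hb => hSim b (hS'S b hb))
      set q₁ := q'.subst γf with hq₁def
      have hstep : IsFactStep Sig ∅ q' q₁ :=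
        ⟨σ, hσ, S', hfact, γf, hmguf, hidoutf, protects_empty _, rfl⟩
      have hre₁ : Reach Sig ∅ q₀ q₁ := Reach.fact hre hstep
      -- transfer of the homomorphism
      have habsatom : ∀ x : Atom, (x.subst γf).subst μ = x.subst μ := by
        intro x
        rw [Atom.subst_subst]
        apply Atom.subst_congr
        intro t _
        exact habsf μ hμuni t
      have hch₁ : ∀ a ∈ q₁.body, a.subst μ ∈ chase Sig D := by
        intro a ha
        obtain ⟨x, hx, rfl⟩ := Finset.mem_image.mp ha
        rw [habsatom x]
        exact hμch x hx
      have hbnf₁ : ∀ a ∈ q₁.body, ∀ t ∈ a.args, t.noNull := by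
        intro a ha t ht
        obtain ⟨x, hx, rfl⟩ := Finset.mem_image.mp ha
        obtain ⟨s, hsx, rfl⟩ := List.mem_map.mp ht
        exact hγfnn s (hbnf x hx s hsx)
      have hhnf₁ : ∀ t ∈ q₁.head.args, t.noNull := by
        intro t ht
        obtain ⟨s, hsx, rfl⟩ := List.mem_map.mp ht
        exact hγfnn s (hhnf s hsx)
      have hhc₁ : ∀ t ∈ q₁.head.args, ∃ cc, μ t = Term.const cc := by
        intro t ht
        obtain ⟨s, hsx, rfl⟩ := List.mem_map.mp ht
        rw [habsf μ hμuni s]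
        exact hhc s hsx
      have hheadeq : q₁.head.subst μ = q'.head.subst μ := habsatom q'.head
      -- measure
      have hLof₁ : Lof Sig D q₁ μ = LL := by
        apply le_antisymm
        · apply Finset.sup_le
          intro a ha
          obtain ⟨x, hx, rfl⟩ := Finset.mem_image.mp ha
          show lvl Sig D ((x.subst γf).subst μ) ≤ LL
          rw [habsatom x, hLLdef]
          exact le_Lof hx
        · have hmem : a₀.subst γf ∈ q₁.body := Finset.mem_image_of_mem _ ha₀
          have h1 : lvl Sig D ((a₀.subst γf).subst μ) ≤ Lof Sig D q₁ μ :=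
            le_Lof hmem
          rw [habsatom a₀, ← hastardef, hastar_lvl] at h1
          exact h1
      have hcnt₁ : cntL Sig D q₁ μ LL ≤ cntL Sig D q' μ LL := by
        unfold cntL
        have hsubf : q₁.body.filter (fun a => lvl Sig D (a.subst μ) = LL) ⊆
            (q'.body.filter (fun a => lvl Sig D (a.subst μ) = LL)).image (Atom.subst γf) := by
          intro a ha
          obtain ⟨haq, hal⟩ := Finset.mem_filter.mp ha
          obtain ⟨x, hx, rfl⟩ := Finset.mem_image.mp haq
          refine Finset.mem_image_of_mem _ (Finset.mem_filter.mpr ⟨hx, ?_⟩)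
          rwa [habsatom x] at hal
        calc _ ≤ ((q'.body.filter (fun a => lvl Sig D (a.subst μ) = LL)).image
            (Atom.subst γf)).card := Finset.card_le_card hsubf
          _ ≤ _ := Finset.card_image_le
      have hcard₁ : q₁.body.card < q'.body.card := by
        obtain ⟨b1, hb1, b2, hb2, hb12⟩ := Finset.one_lt_card.mp h2card
        have hle : q₁.body.card ≤ q'.body.card := Finset.card_image_le
        rcases lt_or_eq_of_le hle with hlt | heqc
        · exact hlt
        · exfalso
          have hinj := Finset.injOn_of_card_image_eq heqc
          exact hb12 (hinj (hS'sub hb1) (hS'sub hb2)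
            (hmguf.1.2 b1 hb1 b2 hb2))
      have hdisj₁ : q₁ ∈ XRewriteOut Sig ∅ q₀ ∨ 1 ≤ Lof Sig D q₁ μ := by
        right; omega
      rcases lt_or_eq_of_le hcnt₁ with hlt | heqcnt
      · obtain ⟨p', hp', ν, hν1, hν2, hν3, hν4, hν5⟩ :=
          IHc (cntL Sig D q₁ μ LL) (by rw [← hL] at hc; omega) q₁.body.card q₁ μ hre₁
            hμcf hch₁ hbnf₁ hhnf₁ hhc₁ hdisj₁ (by rw [hLof₁]; exact hL)
            (by rw [← hL]) rfl
        exact ⟨p', hp', ν, hν1, hν2, hν3, hν4, hν5.trans hheadeq⟩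
      · obtain ⟨p', hp', ν, hν1, hν2, hν3, hν4, hν5⟩ :=
          IHk q₁.body.card (by omega) q₁ μ hre₁ hμcf hch₁ hbnf₁
            hhnf₁ hhc₁ hdisj₁ (by rw [hLof₁]; exact hL)
            (by rw [← hL, heqcnt]; rw [← hL] at hc; exact hc) rfl
        exact ⟨p', hp', ν, hν1, hν2, hν3, hν4, hν5.trans hheadeq⟩
    · -- REWRITING step
      push_neg at hsh
      set M := q'.vars.sup id with hMdef
      set ρ : ℕ → ℕ := fun v => v + (M + 1) with hρdef
      have hinj : Function.Injective ρ := fun a b hab => by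
        simp only [hρdef] at hab; omega
      have hqvle : ∀ v ∈ q'.vars, v ≤ M := fun v hv => Finset.le_sup (f := id) hv
      have hfr : ∀ v, ρ v ∉ q'.vars := by
        intro v hv
        have h1 := hqvle _ hv
        simp only [hρdef] at h1
        omega
      set Φ : Term → Term := fun t => match t with
        | Term.var u => if M + 1 ≤ u then extH σ h n (Term.var (u - (M + 1)))
            else μ (Term.var u)
        | Term.const cc => Term.const cc
        | Term.null m => μ (Term.null m) with hΦdef
      have hΦcf : constFix Φ := fun cc => rfl
      have hΦμ : ∀ t, t.noNull → (∀ v, t = Term.var v → v ∈ q'.vars) → Φ t = μ t := by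
        intro t hnn hv
        cases t with
        | var u =>
          have hle : u ≤ M := hqvle u (hv u rfl)
          show (if M + 1 ≤ u then _ else _) = _
          rw [if_neg (by omega)]
        | const cc => exact (hμcf cc).symm
        | null m => rfl
      have hΦren_term : ∀ w : ℕ, Φ (renT ρ (Term.var w)) = extH σ h n (Term.var w) := by
        intro w
        show (if M + 1 ≤ w + (M + 1) then extH σ h n (Term.var (w + (M + 1) - (M + 1)))
          else _) = _
        rw [if_pos (by omega)]
        congr 2
        omega
      have hσbodnn : ∀ b ∈ σ.body, ∀ t ∈ b.args, t.noNull :=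
        fun b hb => ((hover σ hσ).2.1 b hb).2
      have hheadnnσ : ∀ t ∈ σ.head.args, t.noNull := (hover σ hσ).2.2.2
      have hΦren_atom : ∀ b : Atom, (∀ t ∈ b.args, t.noNull) →
          (b.subst (renT ρ)).subst Φ = b.subst (extH σ h n) := by
        intro b hnn
        rw [Atom.subst_subst]
        apply Atom.subst_congr
        intro t ht
        cases t with
        | var w => exact hΦren_term w
        | const cc =>
          show Term.const cc = h (Term.const cc)
          exact (hcf cc).symm
        | null m => exact absurd (hnn _ ht) (by simp [Term.noNull])
      have hΦhead_astar : ((σ.rename ρ).head).subst Φ = astar := by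
        rw [TGD.rename_head]
        exact (hΦren_atom σ.head hheadnnσ).trans heqa.symm
      have hΦatom : ∀ b ∈ q'.body, b.subst Φ = b.subst μ := by
        intro b hb
        apply Atom.subst_congr
        intro t ht
        apply hΦμ t (hbnf b hb t ht)
        intro v hv
        rw [hv] at ht
        exact Finset.mem_union_right _ (mem_varsOfSet.mpr ⟨b, hb, Atom.mem_vars.mpr ht⟩)
      have hΦhead : q'.head.subst Φ = q'.head.subst μ := by
        apply Atom.subst_congr
        intro t ht
        apply hΦμ t (hhnf t ht)
        intro v hv
        rw [hv] at ht
        exact Finset.mem_union_left _ (Atom.mem_vars.mpr ht)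
      have hUset : IsUnifier Φ (S ∪ {(σ.rename ρ).head}) := by
        apply isUnifier_of_const_image (A := astar) hΦcf
        intro x hx
        rcases Finset.mem_union.mp hx with hxS | hxh
        · rw [hΦatom x (hSsub hxS)]
          exact hSim x hxS
        · rw [Finset.mem_singleton.mp hxh]
          exact hΦhead_astar
      obtain ⟨γ, hmgu, hidout, habs, hγnn⟩ := exists_good_mgu ⟨Φ, hUset⟩
      have happ : Applicable q' (σ.rename ρ) S := by
        refine ⟨hSne, hSsub, ⟨Φ, hUset⟩, ?_⟩
        intro a ha i hexp
        rw [TGD.exPos_rename hinj] at hexp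
        obtain ⟨u, hu, hμu⟩ := hexargS a ha i hexp
        constructor
        · intro cc hcc
          rw [hu] at hcc
          rw [eq_of_some_eq hcc, hμcf] at hμu
          exact Term.noConfusion hμu
        · intro v hv
          exact hsh a ha i hexp v hv
      set q₁ := (CQ.mk q'.head ((q'.body \ S) ∪ (σ.rename ρ).body)).subst γ with hq₁def
      have hstep : IsRewriteStep Sig ∅ q' q₁ :=
        ⟨σ, hσ, ρ, hinj, hfr, S, happ, γ, hmgu, hidout, protects_empty _, rfl⟩
      have hre₁ : Reach Sig ∅ q₀ q₁ := Reach.rw hre hstep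
      have habsatom : ∀ x : Atom, (x.subst γ).subst Φ = x.subst Φ := by
        intro x
        rw [Atom.subst_subst]
        apply Atom.subst_congr
        intro t _
        exact habs Φ hUset t
      have hbody₁ : q₁.body = ((q'.body \ S) ∪ (σ.rename ρ).body).image (Atom.subst γ) := rfl
      have hhead₁ : q₁.head = q'.head.subst γ := rfl
      have hximg : ∀ x ∈ (q'.body \ S) ∪ (σ.rename ρ).body,
          (x ∈ q'.body \ S ∧ (x.subst γ).subst Φ = x.subst μ) ∨
          ((x.subst γ).subst Φ ∈ Ch Sig D n) := by
        intro x hx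
        rcases Finset.mem_union.mp hx with hx1 | hx2
        · exact Or.inl ⟨hx1, by rw [habsatom x, hΦatom x (Finset.mem_sdiff.mp hx1).1]⟩
        · right
          rw [habsatom x]
          rw [TGD.rename_body] at hx2
          obtain ⟨b, hb, rfl⟩ := Finset.mem_image.mp hx2
          rw [hΦren_atom b (hσbodnn b hb), extH_body h n hb]
          exact hbd b hb
      have hch₁ : ∀ a ∈ q₁.body, a.subst Φ ∈ chase Sig D := by
        intro a ha
        rw [hbody₁] at ha
        obtain ⟨x, hx, rfl⟩ := Finset.mem_image.mp ha
        rcases hximg x hx with ⟨hx1, he⟩ | hC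
        · rw [he]
          exact hμch x (Finset.mem_sdiff.mp hx1).1
        · exact Ch_subset_chase Sig D n hC
      have hbnf₁ : ∀ a ∈ q₁.body, ∀ t ∈ a.args, t.noNull := by
        intro a ha t ht
        rw [hbody₁] at ha
        obtain ⟨x, hx, rfl⟩ := Finset.mem_image.mp ha
        obtain ⟨s, hsx, rfl⟩ := List.mem_map.mp ht
        apply hγnn
        rcases Finset.mem_union.mp hx with hx1 | hx2
        · exact hbnf x (Finset.mem_sdiff.mp hx1).1 s hsx
        · rw [TGD.rename_body] at hx2
          obtain ⟨b, hb, rfl⟩ := Finset.mem_image.mp hx2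
          obtain ⟨s0, hs0, rfl⟩ := List.mem_map.mp hsx
          exact renT_noNull ρ (hσbodnn b hb s0 hs0)
      have hhnf₁ : ∀ t ∈ q₁.head.args, t.noNull := by
        intro t ht
        rw [hhead₁] at ht
        obtain ⟨s, hsx, rfl⟩ := List.mem_map.mp ht
        exact hγnn s (hhnf s hsx)
      have hhc₁ : ∀ t ∈ q₁.head.args, ∃ cc, Φ t = Term.const cc := by
        intro t ht
        rw [hhead₁] at ht
        obtain ⟨s, hsx, rfl⟩ := List.mem_map.mp ht
        rw [habs Φ hUset s, hΦμ s (hhnf s hsx)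
          (fun v hv => Finset.mem_union_left _ (Atom.mem_vars.mpr (hv ▸ hsx)))]
        exact hhc s hsx
      have hheadeq : q₁.head.subst Φ = q'.head.subst μ := by
        rw [hhead₁, habsatom q'.head, hΦhead]
      -- measure
      have hLle : Lof Sig D q₁ Φ ≤ LL := by
        apply Finset.sup_le
        intro a ha
        rw [hbody₁] at ha
        obtain ⟨x, hx, rfl⟩ := Finset.mem_image.mp ha
        rcases hximg x hx with ⟨hx1, he⟩ | hC
        · rw [he]
          have h1 : lvl Sig D (x.subst μ) ≤ Lof Sig D q' μ :=
            le_Lof (Finset.mem_sdiff.mp hx1).1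
          omega
        · have := lvl_le Sig D hC
          omega
      have hSfilter : S ⊆ q'.body.filter (fun a => lvl Sig D (a.subst μ) = LL) := by
        intro a ha
        refine Finset.mem_filter.mpr ⟨hSsub ha, ?_⟩
        rw [hSim a ha]
        exact hastar_lvl
      have hcnt₁ : cntL Sig D q₁ Φ LL < cntL Sig D q' μ LL := by
        unfold cntL
        have hsubf : q₁.body.filter (fun a => lvl Sig D (a.subst Φ) = LL) ⊆
            ((q'.body \ S).filter (fun a => lvl Sig D (a.subst μ) = LL)).image
              (Atom.subst γ) := by
          intro a ha
          obtain ⟨haq, hal⟩ := Finset.mem_filter.mp ha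
          rw [hbody₁] at haq
          obtain ⟨x, hx, rfl⟩ := Finset.mem_image.mp haq
          rcases hximg x hx with ⟨hx1, he⟩ | hC
          · refine Finset.mem_image_of_mem _ (Finset.mem_filter.mpr ⟨hx1, ?_⟩)
            rw [← he]
            exact hal
          · exfalso
            have := lvl_le Sig D hC
            omega
        have hsdiff : (q'.body \ S).filter (fun a => lvl Sig D (a.subst μ) = LL) =
            (q'.body.filter (fun a => lvl Sig D (a.subst μ) = LL)) \ S := by
          ext a
          simp only [Finset.mem_filter, Finset.mem_sdiff]
          tauto
        have hSpos : 1 ≤ S.card := Finset.card_pos.mpr hSne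
        have hSlec : S.card ≤ (q'.body.filter (fun a => lvl Sig D (a.subst μ) = LL)).card :=
          Finset.card_le_card hSfilter
        calc (q₁.body.filter (fun a => lvl Sig D (a.subst Φ) = LL)).card
            ≤ (((q'.body \ S).filter (fun a => lvl Sig D (a.subst μ) = LL)).image
              (Atom.subst γ)).card := Finset.card_le_card hsubf
          _ ≤ ((q'.body \ S).filter (fun a => lvl Sig D (a.subst μ) = LL)).card :=
              Finset.card_image_le
          _ = (q'.body.filter (fun a => lvl Sig D (a.subst μ) = LL)).card - S.card := by
              rw [hsdiff, Finset.card_sdiff_of_subset hSfilter]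
          _ < _ := by omega
      have hdisj₁ : q₁ ∈ XRewriteOut Sig ∅ q₀ ∨ 1 ≤ Lof Sig D q₁ Φ :=
        Or.inl (Or.inr ⟨q', hre, hstep⟩)
      rcases lt_or_eq_of_le hLle with hlt | heqL
      · obtain ⟨p', hp', ν, hν1, hν2, hν3, hν4, hν5⟩ :=
          IHL (Lof Sig D q₁ Φ) (by omega) (cntL Sig D q₁ Φ (Lof Sig D q₁ Φ))
            q₁.body.card q₁ Φ hre₁ hΦcf hch₁ hbnf₁ hhnf₁ hhc₁ hdisj₁ rfl rfl rfl
        exact ⟨p', hp', ν, hν1, hν2, hν3, hν4, hν5.trans hheadeq⟩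
      · obtain ⟨p', hp', ν, hν1, hν2, hν3, hν4, hν5⟩ :=
          IHc (cntL Sig D q₁ Φ LL) (by rw [← hL] at hc; omega) q₁.body.card q₁ Φ hre₁
            hΦcf hch₁ hbnf₁ hhnf₁ hhc₁ hdisj₁ (by rw [heqL]; exact hL)
            (by rw [← hL]) rfl
        exact ⟨p', hp', ν, hν1, hν2, hν3, hν4, hν5.trans hheadeq⟩

/-! ### Part 7: the main theorem -/

theorem Atom.subst_id (a : Atom) : a.subst (fun t => t) = a := by
  simp [Atom.subst]

theorem reach_head_subst {Sig : Finset TGD} {q₀ p : CQ} (h : Reach Sig ∅ q₀ p) :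
    ∃ g, p.head = q₀.head.subst g := by
  induction h with
  | refl => exact ⟨fun t => t, (Atom.subst_id q₀.head).symm⟩
  | @rw p p₁ hpre hstep ih =>
    obtain ⟨σ, hσ, ρ, hinj, hfr, S, happ, γ, hmgu, hid, hpr, heq⟩ := hstep
    obtain ⟨g, hg⟩ := ih
    refine ⟨fun t => γ (g t), ?_⟩
    rw [heq]
    show p.head.subst γ = _
    rw [hg, Atom.subst_subst]
  | @fact p p₁ hpre hstep ih =>
    obtain ⟨σ, hσ, S, hfact, γ, hmgu, hid, hpr, heq⟩ := hstep
    obtain ⟨g, hg⟩ := ih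
    refine ⟨fun t => γ (g t), ?_⟩
    rw [heq]
    show p.head.subst γ = _
    rw [hg, Atom.subst_subst]

theorem xout_head_subst {Sig : Finset TGD} {q₀ p : CQ} (h : p ∈ XRewriteOut Sig ∅ q₀) :
    ∃ g, p.head = q₀.head.subst g := by
  rcases h with h | ⟨p₀, hre, hstep⟩
  · rw [Set.mem_singleton_iff.mp h]
    exact ⟨fun t => t, (Atom.subst_id q₀.head).symm⟩
  · obtain ⟨σ, hσ, ρ, hinj, hfr, S, happ, γ, hmgu, hid, hpr, heq⟩ := hstep
    obtain ⟨g, hg⟩ := reach_head_subst hre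
    refine ⟨fun t => γ (g t), ?_⟩
    rw [heq]
    show p₀.head.subst γ = _
    rw [hg, Atom.subst_subst]

theorem mem_compHeadVars {q : CQ} {S : Finset Atom} {v : ℕ} :
    v ∈ compHeadVars q S ↔
      v ∈ varsOfSet S ∩ (q.head.vars ∪ varsOfSet (q.body \ S)) := by
  unfold compHeadVars
  exact Finset.mem_sort _

/-- blocks of an existential-join decomposition are pairwise disjoint -/
theorem decomp_disjoint {Sig : Finset TGD} {q : CQ} {P : Finset (Finset Atom)}
    (hP : ExJoinDecomp Sig q P) {S S' : Finset Atom} (hS : S ∈ P) (hS' : S' ∈ P)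
    (hne : S ≠ S') {a : Atom} (ha : a ∈ S) (ha' : a ∈ S') : False := by
  obtain ⟨T, _, hT⟩ := hP.2.2.1 a (hP.2.1 S hS ha)
  exact hne ((hT S ⟨hS, ha⟩).trans (hT S' ⟨hS', ha'⟩).symm)

/-- the LHS-to-RHS inclusion: soundness of the parallel rewriting -/
theorem parallel_sound
    {R : Schema} {Sig : Finset TGD} {q : CQ}
    (hq : q.overSchema R)
    (hover : ∀ σ ∈ Sig, σ.overSchema R) (hnf : ∀ σ ∈ Sig, σ.NormalForm)
    {D : Finset Atom}
    {P : Finset (Finset Atom)} (hP : OptimalDecomp Sig q P)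
    {pid : Finset Atom → ℕ}
    (hterm : ∀ S ∈ P, ∃ Q : Finset CQ,
      ∀ p : CQ, Reach Sig ∅ (compCQ q pid S) p → ∃ p' ∈ Q, CQEquiv p p') :
    ucqEval (ParallelOut Sig q P pid) ↑D ⊆ certAns q D Sig := by
  intro t ht
  obtain ⟨q', hq'PO, hconstT, hh, ⟨hhcf, hhmem⟩, hmap⟩ := by
    simpa only [ucqEval, Set.mem_iUnion, CQ.eval, Set.mem_setOf_eq] using ht
  obtain ⟨c, ρ, θ, hc1, hρ1, hρ2, hρ3, hθmgu, hq'eq⟩ := hq'PO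
  intro I hDI hsatI
  have hheadnn : ∀ σ ∈ Sig, ∀ s ∈ σ.head.args, s.noNull := fun σ hσ => (hover σ hσ).2.2.2
  -- per component soundness
  have hcomp : ∀ S : Finset Atom, ∃ g' : Term → Term, S ∈ P →
      constFix g' ∧ (∀ a ∈ (compCQ q pid S).body, a.subst g' ∈ I) ∧
        (compCQ q pid S).head.subst g' =
          (c S).head.subst (fun u => hh (θ (renT (ρ S) u))) := by
    intro S
    by_cases hSP : S ∈ P
    · have h₀S : (∀ s ∈ (compCQ q pid S).head.args, s.noNull) ∧
          ∀ a ∈ (compCQ q pid S).body, ∀ s ∈ a.args, s.noNull := by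
        constructor
        · intro s hs
          obtain ⟨v, _, rfl⟩ := List.mem_map.mp hs
          trivial
        · intro a ha s hs
          exact (hq.1 a ((hP.1.2.1 S hSP) ha)).2 s hs
      have hgmem : ∀ b ∈ (c S).body, b.subst (fun u => hh (θ (renT (ρ S) u))) ∈ I := by
        intro b hb
        have hmem : Atom.subst θ (Atom.subst (renT (ρ S)) b) ∈ q'.body := by
          rw [hq'eq]
          exact Finset.mem_sup.mpr ⟨S, hSP,
            Finset.mem_image_of_mem _ (Finset.mem_image_of_mem _ hb)⟩
        have := hhmem _ hmem
        rw [Atom.subst_subst, Atom.subst_subst] at this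
        exact hDI this
      have hgcf : constFix (fun u => hh (θ (renT (ρ S) u))) := by
        intro cc
        show hh (θ (renT (ρ S) (Term.const cc))) = _
        rw [renT_const, hθmgu.1.1, hhcf]
      obtain ⟨g', hg'1, hg'2, hg'3⟩ := xrewrite_sound hsatI hnf hheadnn (hterm S hSP)
        h₀S (hc1 S hSP) hgcf hgmem
      exact ⟨g', fun _ => ⟨hg'1, hg'2, hg'3.symm ▸ hg'3⟩⟩
    · exact ⟨fun t => t, fun h => absurd h hSP⟩
  choose g' hg' using hcomp
  -- exported variables agree with hh ∘ θ
  have hexp : ∀ S ∈ P, ∀ v ∈ compHeadVars q S,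
      g' S (Term.var v) = hh (θ (Term.var v)) := by
    intro S hSP v hv
    have hpair := hθmgu.1.2 _ (Finset.mem_image_of_mem
      (fun S => (Atom.subst (renT (ρ S)) (c S).head, (compCQ q pid S).head)) hSP)
    have hpair2 := congrArg (Atom.subst hh) hpair
    rw [Atom.subst_subst, Atom.subst_subst, Atom.subst_subst] at hpair2
    have hleft : (c S).head.subst (fun u => hh (θ (renT (ρ S) u))) =
        (compCQ q pid S).head.subst (g' S) := ((hg' S hSP).2.2).symm
    rw [hleft] at hpair2
    have hargs := congrArg Atom.args hpair2
    simp only [Atom.subst] at hargs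
    have := list_map_eq_pointwise hargs (Term.var v)
      (List.mem_map_of_mem (f := Term.var) hv)
    exact this
  -- assemble the homomorphism
  set G : Term → Term := fun s => match s with
    | Term.var v => if h : ∃ S, S ∈ P ∧ v ∈ varsOfSet S then g' h.choose (Term.var v)
        else hh (θ (Term.var v))
    | Term.const cc => Term.const cc
    | Term.null m => hh (θ (Term.null m)) with hGdef
  have hGcf : constFix G := fun cc => rfl
  -- uniqueness of blocks
  have hblocks := hP.1.2.2.1
  have hGatom : ∀ a ∈ q.body, a.subst G ∈ I := by
    intro a ha
    obtain ⟨Sa, ⟨hSaP, haSa⟩, huniq⟩ := hblocks a ha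
    have heq : a.subst G = a.subst (g' Sa) := by
      apply Atom.subst_congr
      intro s hs
      cases s with
      | const cc => exact ((hg' Sa hSaP).1 cc).symm
      | null m => exact absurd ((hq.1 a ha).2 _ hs) (by simp [Term.noNull])
      | var v =>
        have hvSa : v ∈ varsOfSet Sa :=
          mem_varsOfSet.mpr ⟨a, haSa, Atom.mem_vars.mpr hs⟩
        have hex : ∃ S, S ∈ P ∧ v ∈ varsOfSet S := ⟨Sa, hSaP, hvSa⟩
        show (if h : ∃ S, S ∈ P ∧ v ∈ varsOfSet S then g' h.choose (Term.var v)
          else hh (θ (Term.var v))) = g' Sa (Term.var v)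
        rw [dif_pos hex]
        set S₀ := hex.choose with hS₀def
        obtain ⟨hS₀P, hvS₀⟩ := hex.choose_spec
        by_cases hSS : S₀ = Sa
        · rw [hSS]
        · -- v is exported from both blocks
          have hvin : ∀ T T' : Finset Atom, T ∈ P → T' ∈ P → T ≠ T' →
              v ∈ varsOfSet T → v ∈ varsOfSet T' → v ∈ compHeadVars q T := by
            intro T T' hT hT' hTT' hvT hvT'
            rw [mem_compHeadVars]
            refine Finset.mem_inter.mpr ⟨hvT, Finset.mem_union_right _ ?_⟩
            obtain ⟨b, hbT', hvb⟩ := mem_varsOfSet.mp hvT'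
            refine mem_varsOfSet.mpr ⟨b, ?_, hvb⟩
            refine Finset.mem_sdiff.mpr ⟨hP.1.2.1 T' hT' hbT', ?_⟩
            intro hbT
            exact decomp_disjoint hP.1 hT hT' hTT' hbT hbT'
          rw [hexp S₀ hS₀P v (hvin S₀ Sa hS₀P hSaP hSS hvS₀ hvSa),
            hexp Sa hSaP v (hvin Sa S₀ hSaP hS₀P (Ne.symm hSS) hvSa hvS₀)]
    rw [heq]
    exact (hg' Sa hSaP).2.1 a haSa
  have hGhead : q.head.args.map G = t := by
    rw [← hmap, hq'eq]
    show _ = (q.head.subst θ).args.map hh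
    rw [Atom.subst_args, List.map_map]
    apply List.map_congr_left
    intro s hs
    cases s with
    | const cc =>
      show Term.const cc = hh (θ (Term.const cc))
      rw [hθmgu.1.1, hhcf]
    | null m => exact absurd (hq.2 _ hs) (by simp [Term.noNull])
    | var v =>
      show (if h : ∃ S, S ∈ P ∧ v ∈ varsOfSet S then g' h.choose (Term.var v)
        else hh (θ (Term.var v))) = hh (θ (Term.var v))
      by_cases hex : ∃ S, S ∈ P ∧ v ∈ varsOfSet S
      · rw [dif_pos hex]
        obtain ⟨hS₀P, hvS₀⟩ := hex.choose_spec
        apply hexp _ hS₀P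
        rw [mem_compHeadVars]
        exact Finset.mem_inter.mpr ⟨hvS₀,
          Finset.mem_union_left _ (Atom.mem_vars.mpr hs)⟩
      · rw [dif_neg hex]
  exact ⟨hconstT, G, ⟨hGcf, fun a ha => hGatom a ha⟩, hGhead⟩

/-- the RHS-to-LHS inclusion: completeness of the parallel rewriting -/
theorem parallel_complete
    {R : Schema} {Sig : Finset TGD} {q : CQ}
    (hq : q.overSchema R)
    (hover : ∀ σ ∈ Sig, σ.overSchema R) (hnf : ∀ σ ∈ Sig, σ.NormalForm)
    {D : Finset Atom} (hD : IsDatabase R D)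
    {P : Finset (Finset Atom)} (hP : OptimalDecomp Sig q P)
    {pid : Finset Atom → ℕ} :
    certAns q D Sig ⊆ ucqEval (ParallelOut Sig q P pid) ↑D := by
  intro t ht
  obtain ⟨hconstT, μ, ⟨hμcf, hμmem⟩, hμmap⟩ :=
    ht (chase Sig D) (D_subset_chase Sig D) (chase_sat Sig D)
  -- exported variables are mapped to constants
  have hexpconst : ∀ S ∈ P, ∀ v ∈ compHeadVars q S,
      ∃ cc, μ (Term.var v) = Term.const cc := by
    intro S hSP v hv
    rw [mem_compHeadVars] at hv
    obtain ⟨hvS, hvout⟩ := Finset.mem_inter.mp hv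
    rcases Finset.mem_union.mp hvout with hvh | hvo
    · -- distinguished variable
      have : μ (Term.var v) ∈ t := by
        rw [← hμmap]
        exact List.mem_map_of_mem (f := μ) (Atom.mem_vars.mp hvh)
      obtain ⟨cc, hcc⟩ := hconstT _ this
      exact ⟨cc, hcc⟩
    · -- occurs in another block: cannot be a null
      obtain ⟨b, hbS, hvb⟩ := mem_varsOfSet.mp hvS
      have hbq : b ∈ q.body := hP.1.2.1 S hSP hbS
      have hterm : μ (Term.var v) ∈ (b.subst μ).args :=
        List.mem_map_of_mem (f := μ) (Atom.mem_vars.mp hvb)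
      have hlev := mem_Ch_lvl Sig D (hμmem b hbq)
      rcases ch_args Sig D hD hover _ _ hlev _ hterm with ⟨cc, hcc⟩ |
        ⟨σ', h', n', hσ'S, hcf', hbd', hle', hnull⟩
      · exact ⟨cc, hcc⟩
      · exfalso
        -- v occurs only at affected positions
        have hoa : OnlyAffectedVar Sig q v := by
          refine ⟨σ', hσ'S, ?_⟩
          intro a ha j hj
          have hmem2 : (a.subst μ).args[j]? = some (Term.null (ncode σ' h' n')) := by
            rw [Atom.subst_getElem?, hj]
            simp only [Option.map_some]
            rw [← hnull]
          have := chAff Sig D hD hover _ _ (mem_Ch_lvl Sig D (hμmem a ha)) j _ hmem2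
            σ' h' n' rfl
          rwa [Atom.subst_pred] at this
        obtain ⟨S₁, hS₁P, hvS₁, hS₁uniq⟩ := hP.1.2.2.2 v
          (mem_varsOfSet.mpr ⟨b, hbq, hvb⟩) hoa
        have hSS₁ : S = S₁ := by
          by_contra hne
          exact hS₁uniq S hSP hne hvS
        obtain ⟨b', hb', hvb'⟩ := mem_varsOfSet.mp hvo
        obtain ⟨hb'q, hb'nS⟩ := Finset.mem_sdiff.mp hb'
        obtain ⟨S₂, ⟨hS₂P, hb'S₂⟩, _⟩ := hP.1.2.2.1 b' hb'q
        have hS₂ne : S₂ ≠ S₁ := by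
          intro he
          rw [← hSS₁] at he
          exact hb'nS (he ▸ hb'S₂)
        exact hS₁uniq S₂ hS₂P hS₂ne (mem_varsOfSet.mpr ⟨b', hb'S₂, hvb'⟩)
  -- run the completeness of XRewrite on each component
  have hstep : ∀ S : Finset Atom, ∃ (cS : CQ) (νS : Term → Term), S ∈ P →
      cS ∈ XRewriteOut Sig ∅ (compCQ q pid S) ∧ constFix νS ∧
      (∀ a ∈ cS.body, a.subst νS ∈ (↑D : Set Atom)) ∧
      (∀ s ∈ cS.head.args, s.noNull) ∧ (∀ a ∈ cS.body, ∀ s ∈ a.args, s.noNull) ∧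
      cS.head.subst νS = (compCQ q pid S).head.subst μ := by
    intro S
    by_cases hSP : S ∈ P
    · have h1 : ∀ a ∈ (compCQ q pid S).body, a.subst μ ∈ chase Sig D :=
        fun a ha => hμmem a (hP.1.2.1 S hSP ha)
      have h2 : ∀ a ∈ (compCQ q pid S).body, ∀ s ∈ a.args, s.noNull :=
        fun a ha s hs => (hq.1 a (hP.1.2.1 S hSP ha)).2 s hs
      have h3 : ∀ s ∈ (compCQ q pid S).head.args, s.noNull := by
        intro s hs
        obtain ⟨v, _, rfl⟩ := List.mem_map.mp hs
        trivial
      have h4 : ∀ s ∈ (compCQ q pid S).head.args, ∃ cc, μ s = Term.const cc := by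
        intro s hs
        obtain ⟨v, hv, rfl⟩ := List.mem_map.mp hs
        exact hexpconst S hSP v hv
      obtain ⟨p', hp', ν, hν1, hν2, hν3, hν4, hν5⟩ :=
        comp_main hD hover hnf (compCQ q pid S) (Lof Sig D (compCQ q pid S) μ)
          (cntL Sig D (compCQ q pid S) μ (Lof Sig D (compCQ q pid S) μ))
          (compCQ q pid S).body.card (compCQ q pid S) μ Reach.refl hμcf h1 h2 h3 h4
          (Or.inl (Or.inl rfl)) rfl rfl rfl
      exact ⟨p', ν, fun _ => ⟨hp', hν1, hν2, hν3, hν4, hν5⟩⟩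
    · exact ⟨compCQ q pid S, fun s => s, fun h => absurd h hSP⟩
  choose cS νS hcν using hstep
  -- fresh renamings
  set NV : ℕ := q.vars.sup id + 1 with hNVdef
  set sE : Finset Atom → ℕ := fun S => Encodable.encode (S.image atomToN) with hsEdef
  set ρf : Finset Atom → ℕ → ℕ := fun S v => NV + Nat.pair (sE S) v with hρfdef
  have hsEinj : Function.Injective sE := by
    intro S S' he
    exact Finset.image_injective atomToN_inj (Encodable.encode_injective he)
  have hρuniq : ∀ S S' v u, ρf S v = ρf S' u → S = S' ∧ v = u := by
    intro S S' v u he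
    simp only [hρfdef] at he
    have h2 : Nat.pair (sE S) v = Nat.pair (sE S') u := by omega
    have h3 := congrArg Nat.unpair h2
    simp only [Nat.unpair_pair, Prod.mk.injEq] at h3
    exact ⟨hsEinj h3.1, h3.2⟩
  have hρinj : ∀ S, Function.Injective (ρf S) := fun S v u he => (hρuniq S S v u he).2
  have hρfresh : ∀ S, ∀ v, ρf S v ∉ q.vars := by
    intro S v hv
    have h1 : ρf S v ≤ q.vars.sup id := Finset.le_sup (f := id) hv
    simp only [hρfdef] at h1
    omega
  have hρcross : ∀ S, S ∈ P → ∀ S', S' ∈ P → S ≠ S' → ∀ v u, ρf S v ≠ ρf S' u := by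
    intro S _ S' _ hne v u he
    exact hne (hρuniq S S' v u he).1
  -- the reconciliation solution
  set Θ : Term → Term := fun s => match s with
    | Term.var u => if h : ∃ p : Finset Atom × ℕ, p.1 ∈ P ∧ ρf p.1 p.2 = u then
        νS h.choose.1 (Term.var h.choose.2) else μ (Term.var u)
    | Term.const cc => Term.const cc
    | Term.null m => μ (Term.null m) with hΘdef
  have hΘcf : constFix Θ := fun cc => rfl
  have hΘρ : ∀ S ∈ P, ∀ w, Θ (Term.var (ρf S w)) = νS S (Term.var w) := by
    intro S hSP w
    have hex : ∃ p : Finset Atom × ℕ, p.1 ∈ P ∧ ρf p.1 p.2 = ρf S w := ⟨(S, w), hSP, rfl⟩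
    show (if h : ∃ p : Finset Atom × ℕ, p.1 ∈ P ∧ ρf p.1 p.2 = ρf S w then
        νS h.choose.1 (Term.var h.choose.2) else μ (Term.var (ρf S w))) = _
    rw [dif_pos hex]
    obtain ⟨hP₀, heq₀⟩ := hex.choose_spec
    obtain ⟨hS₀, hw₀⟩ := hρuniq _ _ _ _ heq₀
    rw [hS₀, hw₀]
  have hΘq : ∀ v ∈ q.vars, Θ (Term.var v) = μ (Term.var v) := by
    intro v hv
    have hle : v ≤ q.vars.sup id := Finset.le_sup (f := id) hv
    have hnex : ¬ ∃ p : Finset Atom × ℕ, p.1 ∈ P ∧ ρf p.1 p.2 = v := by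
      rintro ⟨p, _, hpv⟩
      simp only [hρfdef] at hpv
      omega
    show (if h : ∃ p : Finset Atom × ℕ, p.1 ∈ P ∧ ρf p.1 p.2 = v then
        νS h.choose.1 (Term.var h.choose.2) else μ (Term.var v)) = _
    rw [dif_neg hnex]
  -- Θ solves the reconciliation pairs
  have hΘsol : IsUnifPairs Θ (P.image fun S =>
      (Atom.subst (renT (ρf S)) (cS S).head, (compCQ q pid S).head)) := by
    refine ⟨hΘcf, ?_⟩
    intro pr hpr
    obtain ⟨S, hSP, rfl⟩ := Finset.mem_image.mp hpr
    obtain ⟨hcx, hνcf, hνmem, hcnnh, hcnnb, hcheq⟩ := hcν S hSP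
    show Atom.subst Θ (Atom.subst (renT (ρf S)) (cS S).head) =
      Atom.subst Θ (compCQ q pid S).head
    have hleft : Atom.subst Θ (Atom.subst (renT (ρf S)) (cS S).head) =
        (cS S).head.subst (νS S) := by
      rw [Atom.subst_subst]
      apply Atom.subst_congr
      intro s hs
      cases s with
      | var w => exact hΘρ S hSP w
      | const cc =>
        show Term.const cc = νS S (Term.const cc)
        exact (hνcf cc).symm
      | null m => exact absurd (hcnnh _ hs) (by simp [Term.noNull])
    have hright : Atom.subst Θ (compCQ q pid S).head =
        (compCQ q pid S).head.subst μ := by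
      apply Atom.subst_congr
      intro s hs
      obtain ⟨v, hv, rfl⟩ := List.mem_map.mp hs
      apply hΘq
      have h1 : v ∈ varsOfSet S := (Finset.mem_inter.mp (mem_compHeadVars.mp hv)).1
      obtain ⟨b, hbS, hvb⟩ := mem_varsOfSet.mp h1
      exact Finset.mem_union_right _ (mem_varsOfSet.mpr ⟨b, hP.1.2.1 S hSP hbS, hvb⟩)
    rw [hleft, hright, hcheq]
  obtain ⟨θ, hθmgu, hθabs⟩ := exists_good_mgu_pairs ⟨Θ, hΘsol⟩
  set qstar : CQ := CQ.mk (q.head.subst θ)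
    (P.sup fun S => Finset.image (Atom.subst θ)
      ((cS S).body.image (Atom.subst (renT (ρf S))))) with hqstardef
  have hqstarPO : qstar ∈ ParallelOut Sig q P pid := by
    refine ⟨cS, ρf, θ, fun S hSP => (hcν S hSP).1, fun S _ => hρinj S,
      fun S _ v => hρfresh S v, fun S hS S' hS' hne v u => hρcross S hS S' hS' hne v u,
      hθmgu, rfl⟩
  have hΘmem : ∀ a ∈ qstar.body, a.subst Θ ∈ (↑D : Set Atom) := by
    intro a ha
    obtain ⟨S, hSP, ha2⟩ := Finset.mem_sup.mp ha
    obtain ⟨x, hx2, rfl⟩ := Finset.mem_image.mp ha2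
    obtain ⟨b, hb, rfl⟩ := Finset.mem_image.mp hx2
    obtain ⟨hcx, hνcf, hνmem, hcnnh, hcnnb, hcheq⟩ := hcν S hSP
    have e1 : ((b.subst (renT (ρf S))).subst θ).subst Θ =
        (b.subst (renT (ρf S))).subst Θ := by
      rw [Atom.subst_subst]
      apply Atom.subst_congr
      intro s _
      exact hθabs Θ hΘsol s
    have e2 : (b.subst (renT (ρf S))).subst Θ = b.subst (νS S) := by
      rw [Atom.subst_subst]
      apply Atom.subst_congr
      intro s hs
      cases s with
      | var w => exact hΘρ S hSP w
      | const cc =>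
        show Term.const cc = νS S (Term.const cc)
        exact (hνcf cc).symm
      | null m => exact absurd (hcnnb b hb _ hs) (by simp [Term.noNull])
    rw [e1, e2]
    exact hνmem b hb
  have hΘhead : qstar.head.args.map Θ = t := by
    show (q.head.subst θ).args.map Θ = t
    rw [Atom.subst_args, List.map_map, ← hμmap]
    apply List.map_congr_left
    intro s hs
    show Θ (θ s) = μ s
    rw [hθabs Θ hΘsol s]
    cases s with
    | var v => exact hΘq v (Finset.mem_union_left _ (Atom.mem_vars.mpr hs))
    | const cc =>
      show Term.const cc = μ (Term.const cc)
      exact (hμcf cc).symm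
    | null m => exact absurd (hq.2 _ hs) (by simp [Term.noNull])
  exact Set.mem_iUnion₂.mpr ⟨qstar, hqstarPO, hconstT, Θ,
    ⟨hΘcf, fun a ha => hΘmem a ha⟩, hΘhead⟩

end

/-- correctness of XRewriteParallel: the UCQ obtained by
decomposing q, rewriting the components independently and unfolding via the
reconciliation rule, evaluated over D, yields the certain answers of q. -/
theorem xrewrite_parallel_correct
    (R : Schema) (Sig : Finset TGD) (q : CQ)
    (hq : q.overSchema R)
    (hover : ∀ σ ∈ Sig, σ.overSchema R) (hnf : ∀ σ ∈ Sig, σ.NormalForm)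
    (D : Finset Atom) (hD : IsDatabase R D)
    (P : Finset (Finset Atom)) (hP : OptimalDecomp Sig q P)
    (pid : Finset Atom → ℕ) (hpidInj : Function.Injective pid)
    (hpidFresh : ∀ S : Finset Atom, pid S ∉ R.preds ∧ pid S ≠ q.head.pred)
    (hterm : ∀ S ∈ P, ∃ Q : Finset CQ,
      ∀ p : CQ, Reach Sig ∅ (compCQ q pid S) p → ∃ p' ∈ Q, CQEquiv p p') :
    ucqEval (ParallelOut Sig q P pid) ↑D = certAns q D Sig := by
  exact Set.Subset.antisymm (parallel_sound hq hover hnf hP hterm)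
    (parallel_complete hq hover hnf hD hP)

end OntDB
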